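/- arXiv:1505.00703 — 3 statements merged into one kernel-verified Lean document; each statement's English description precedes it below -/
import Mathlib

section
/- For every p ≥ 4, the p-cycle C_p — the graph on vertex set {1,…,p} with edge set {(i,i+1) : 1 ≤ i ≤ p−1} ∪ {(1,p)} — is a Generalized Bartlett graph, and the identity ordering on {1,…,p} is a GB ordering of C_p. -/
open SimpleGraph

variable {V : Type*}

/-- One step of the elimination/triangulation process: at step `k` (0-based) the vertex with
label `k` is eliminated, and all pairs of its neighbours with larger labels are joined. -/
def triStep {n : ℕ} (σ : V ≃ Fin n) (H : SimpleGraph V) (k : ℕ) : SimpleGraph V where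
  Adj u v := H.Adj u v ∨
    (u ≠ v ∧ ∃ hk : k < n, k < (σ u : ℕ) ∧ k < (σ v : ℕ) ∧
      H.Adj u (σ.symm ⟨k, hk⟩) ∧ H.Adj v (σ.symm ⟨k, hk⟩))
  symm := by
    constructor
    rintro u v (h | ⟨hne, hk, h1, h2, h3, h4⟩)
    · exact Or.inl h.symm
    · exact Or.inr ⟨hne.symm, hk, h2, h1, h4, h3⟩
  loopless := by
    constructor
    rintro u (h | ⟨hne, _⟩)
    · exact H.ne_of_adj h rfl
    · exact hne rfl

/-- The sequence of graphs `E_0, E_1, …` in the triangulation process. -/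
def triSeq {n : ℕ} (σ : V ≃ Fin n) (G : SimpleGraph V) : ℕ → SimpleGraph V
  | 0 => G
  | k + 1 => triStep σ (triSeq σ G k) k

/-- The triangulation `D^σ(G)` of `G` under the ordering `σ` (`p − 2` elimination steps). -/
def triangulation {n : ℕ} (σ : V ≃ Fin n) (G : SimpleGraph V) : SimpleGraph V :=
  triSeq σ G (n - 2)

/-- `σ` is a perfect elimination ordering of `G`: for every `j`, the vertex `σ⁻¹(j)` together
with its higher-labelled neighbours forms a clique. -/
def IsPerfectElimOrdering {n : ℕ} (σ : V ≃ Fin n) (G : SimpleGraph V) : Prop :=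
  ∀ j : Fin n,
    G.IsClique ({σ.symm j} ∪ {v : V | (j : ℕ) < (σ v : ℕ) ∧ G.Adj v (σ.symm j)})

/-- A graph is decomposable (chordal) if it has no induced cycle of length `≥ 4`. -/
def IsDecomposable (G : SimpleGraph V) : Prop :=
  ∀ n : ℕ, 4 ≤ n → IsEmpty (SimpleGraph.cycleGraph n ↪g G)

/-- `σ` is a Generalized Bartlett ordering of `G`: no triangle of `D^σ(G)` consists of three
non-edges of `G`. -/
def IsGBOrdering {n : ℕ} (σ : V ≃ Fin n) (G : SimpleGraph V) : Prop :=
  ¬ ∃ u v w : V,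
      ¬ G.Adj u v ∧ ¬ G.Adj v w ∧ ¬ G.Adj u w ∧
      (triangulation σ G).Adj u v ∧ (triangulation σ G).Adj v w ∧
      (triangulation σ G).Adj u w

/-- `G` is a Generalized Bartlett graph: it admits a Generalized Bartlett ordering. -/
def IsGB (G : SimpleGraph V) : Prop :=
  ∃ (n : ℕ) (σ : V ≃ Fin n), IsGBOrdering σ G

/-- for `p ≥ 4` the `p`-cycle (vertices `{1,…,p}`, here 0-based as `Fin p`, with
edges `(i,i+1)` for `1 ≤ i ≤ p−1` and `(1,p)`) is Generalized Bartlett, and the identity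
ordering is a GB ordering. -/
theorem isGB_cycle (p : ℕ) (hp : 4 ≤ p) (C : SimpleGraph (Fin p))
    (hC : ∀ a b : Fin p, C.Adj a b ↔
      ((b : ℕ) = (a : ℕ) + 1 ∨ (a : ℕ) = (b : ℕ) + 1 ∨
        ((a : ℕ) = 0 ∧ (b : ℕ) = p - 1) ∨ ((b : ℕ) = 0 ∧ (a : ℕ) = p - 1))) :
    IsGBOrdering (Equiv.refl (Fin p)) C ∧ IsGB C := by
  have key : ∀ k, k ≤ p - 2 → ∀ u v : Fin p,
      (triSeq (Equiv.refl (Fin p)) C k).Adj u v →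
      C.Adj u v ∨ (u : ℕ) = p - 1 ∨ (v : ℕ) = p - 1 := by
    intro k
    induction k with
    | zero => intro _ u v h; exact Or.inl h
    | succ k ih =>
      intro hk u v h
      rcases h with h | ⟨hne, hkn, hu, hv, hau, hav⟩
      · exact ih (by omega) u v h
      · simp only [Equiv.refl_apply, Equiv.refl_symm] at hu hv hau hav
        have hk' : k ≤ p - 2 := by omega
        have HU := ih hk' u _ hau
        have HV := ih hk' v _ hav
        have hkval : ((⟨k, hkn⟩ : Fin p) : ℕ) = k := rfl
        have hU' : (u : ℕ) = k + 1 ∨ (u : ℕ) = p - 1 := by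
          rcases HU with h | h | h
          · rw [hC] at h; rw [hkval] at h; omega
          · exact Or.inr h
          · rw [hkval] at h; omega
        have hV' : (v : ℕ) = k + 1 ∨ (v : ℕ) = p - 1 := by
          rcases HV with h | h | h
          · rw [hC] at h; rw [hkval] at h; omega
          · exact Or.inr h
          · rw [hkval] at h; omega
        rcases hU' with h1 | h1
        · rcases hV' with h2 | h2
          · exact absurd (Fin.ext (h1.trans h2.symm)) hne
          · exact Or.inr (Or.inr h2)
        · exact Or.inr (Or.inl h1)
  have hGB : IsGBOrdering (Equiv.refl (Fin p)) C := by
    rintro ⟨u, v, w, h1, h2, h3, d1, d2, d3⟩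
    have e1 := key (p - 2) le_rfl u v d1
    have e2 := key (p - 2) le_rfl v w d2
    have e3 := key (p - 2) le_rfl u w d3
    have n1 : (u : ℕ) ≠ (v : ℕ) := fun h => d1.ne (Fin.ext h)
    have n2 : (v : ℕ) ≠ (w : ℕ) := fun h => d2.ne (Fin.ext h)
    have n3 : (u : ℕ) ≠ (w : ℕ) := fun h => d3.ne (Fin.ext h)
    rcases e1 with h | e1; · exact h1 h
    rcases e2 with h | e2; · exact h2 h
    rcases e3 with h | e3; · exact h3 h
    omega
  exact ⟨hGB, p, Equiv.refl (Fin p), hGB⟩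
end

section
/- (Generalized Bartlett implies Property-A and Property-B.) Let G be a graph on {1,…,p} with edge set E such that the identity ordering is a Generalized Bartlett ordering of G. Then G (with the identity ordering) satisfies both Property-A and Property-B. -/
open SimpleGraph

variable {V : Type*}

open scoped Classical BigOperators

/-- Column `j` (as a natural number), row `i`, of the modified Cholesky factor `L(L_I, D)`:
`L_{jj} = 1`, `L_{ij} = 0` for `i < j`, `L_{ij} = ℓ_{ij}` for `i > j` with `(i,j) ∈ E`, and
`L_{ij} = −(∑_{k<j} L_{ik} L_{jk} D_k)/D_j` for `i > j` with `(i,j) ∉ E`. -/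
noncomputable def cholCol (p : ℕ) (G : SimpleGraph (Fin p)) (ℓ : Fin p → Fin p → ℝ)
    (D : Fin p → ℝ) : ℕ → Fin p → ℝ
  | j => fun i =>
    if hj : j < p then
      if (i : ℕ) = j then 1
      else if (i : ℕ) < j then 0
      else if G.Adj i ⟨j, hj⟩ then ℓ i ⟨j, hj⟩
      else -(∑ k ∈ (Finset.range j).attach,
          cholCol p G ℓ D k.1 i * cholCol p G ℓ D k.1 ⟨j, hj⟩ *
            D ⟨k.1, (Finset.mem_range.mp k.2).trans hj⟩) / D ⟨j, hj⟩
    else 0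
termination_by j => j
decreasing_by all_goals exact Finset.mem_range.mp k.2

/-- Recover `D` from `D̃`:  `D_k = ∏_{l ≤ k} D̃_l`. -/
noncomputable def Dof (p : ℕ) (Dt : Fin p → ℝ) (k : Fin p) : ℝ :=
  ∏ l ∈ Finset.Iic k, Dt l

/-- Update the `(r,s)` entry of a function of two indices. -/
def updEntry (p : ℕ) (ℓ : Fin p → Fin p → ℝ) (r s : Fin p) (t : ℝ) :
    Fin p → Fin p → ℝ :=
  fun i j => if i = r ∧ j = s then t else ℓ i j

/-- Property-A: each dependent entry `L_{ij}` (`i > j`, `(i,j) ∉ E`) is an affine function of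
each independent entry `ℓ_{rs}` (`r > s`, `(r,s) ∈ E`), all other independent entries and all
of `D̃` being held fixed at arbitrary values. -/
def PropertyA (p : ℕ) (G : SimpleGraph (Fin p)) : Prop :=
  ∀ i j : Fin p, j < i → ¬ G.Adj i j →
    ∀ r s : Fin p, s < r → G.Adj r s →
      ∀ (ℓ : Fin p → Fin p → ℝ) (Dt : Fin p → ℝ), (∀ k, 0 < Dt k) →
        ∃ a b : ℝ, ∀ t : ℝ,
          cholCol p G (updEntry p ℓ r s t) (Dof p Dt) (j : ℕ) i = a * t + b

/-- Property-B: each dependent entry `L_{ij}` (`i > j`, `(i,j) ∉ E`), viewed as a function of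
each single `D̃_k` with all other variables held fixed, has the form `a + b / D̃_k`. -/
def PropertyB (p : ℕ) (G : SimpleGraph (Fin p)) : Prop :=
  ∀ i j : Fin p, j < i → ¬ G.Adj i j →
    ∀ k : Fin p,
      ∀ (ℓ : Fin p → Fin p → ℝ) (Dt : Fin p → ℝ), (∀ k', 0 < Dt k') →
        ∃ a b : ℝ, ∀ t : ℝ, 0 < t →
          cholCol p G ℓ (Dof p (Function.update Dt k t)) (j : ℕ) i = a + b / t

section MyGBProof

/-- Equation lemma for `cholCol`. -/
theorem cholCol_eq (p : ℕ) (G : SimpleGraph (Fin p)) (ℓ : Fin p → Fin p → ℝ)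
    (D : Fin p → ℝ) (j : ℕ) (i : Fin p) :
    cholCol p G ℓ D j i =
    if hj : j < p then
      if (i : ℕ) = j then 1
      else if (i : ℕ) < j then 0
      else if G.Adj i ⟨j, hj⟩ then ℓ i ⟨j, hj⟩
      else -(∑ k ∈ (Finset.range j).attach,
          cholCol p G ℓ D k.1 i * cholCol p G ℓ D k.1 ⟨j, hj⟩ *
            D ⟨k.1, (Finset.mem_range.mp k.2).trans hj⟩) / D ⟨j, hj⟩
    else 0 := by
  rw [cholCol]

theorem cholCol_edge {p : ℕ} (G : SimpleGraph (Fin p)) (ℓ : Fin p → Fin p → ℝ)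
    (D : Fin p → ℝ) {j : ℕ} (hj : j < p) {i : Fin p} (hij : j < (i : ℕ))
    (hadj : G.Adj i ⟨j, hj⟩) : cholCol p G ℓ D j i = ℓ i ⟨j, hj⟩ := by
  rw [cholCol_eq, dif_pos hj, if_neg (by omega), if_neg (by omega), if_pos hadj]

theorem cholCol_dep {p : ℕ} (G : SimpleGraph (Fin p)) (ℓ : Fin p → Fin p → ℝ)
    (D : Fin p → ℝ) {j : ℕ} (hj : j < p) {i : Fin p} (hij : j < (i : ℕ))
    (hadj : ¬ G.Adj i ⟨j, hj⟩) :
    cholCol p G ℓ D j i = -(∑ k ∈ (Finset.range j).attach,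
          cholCol p G ℓ D k.1 i * cholCol p G ℓ D k.1 ⟨j, hj⟩ *
            D ⟨k.1, (Finset.mem_range.mp k.2).trans hj⟩) / D ⟨j, hj⟩ := by
  rw [cholCol_eq, dif_pos hj, if_neg (by omega), if_neg (by omega), if_neg hadj]

theorem myTriSeq_mono {n : ℕ} (σ : V ≃ Fin n) (H : SimpleGraph V) {a b : ℕ} (h : a ≤ b) :
    triSeq σ H a ≤ triSeq σ H b := by
  induction b with
  | zero => rw [Nat.le_zero.mp h]
  | succ b ih =>
    rcases Nat.lt_or_ge a (b + 1) with h' | h'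
    · intro u v huv
      exact Or.inl (ih (Nat.lt_succ_iff.mp h') huv)
    · rw [le_antisymm h h']

theorem le_myTriangulation {n : ℕ} (σ : V ≃ Fin n) (H : SimpleGraph V) :
    H ≤ triangulation σ H :=
  myTriSeq_mono σ H (Nat.zero_le _)

theorem myTriSeq_adj_down {n : ℕ} (σ : V ≃ Fin n) (H : SimpleGraph V) {u v : V} :
    ∀ N M : ℕ, M ≤ N → ((σ u : ℕ) ≤ M ∨ (σ v : ℕ) ≤ M) →
    (triSeq σ H N).Adj u v → (triSeq σ H M).Adj u v := by
  intro N
  induction N with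
  | zero =>
    intro M hM _ h
    rw [Nat.le_zero.mp hM]; exact h
  | succ N ih =>
    intro M hM hlab h
    rcases Nat.lt_or_ge M (N + 1) with h' | h'
    · have hMN : M ≤ N := Nat.lt_succ_iff.mp h'
      rcases (h : (triSeq σ H N).Adj u v ∨ _) with h | ⟨hne, hk, h1, h2, h3, h4⟩
      · exact ih M hMN hlab h
      · exfalso
        rcases hlab with hl | hl
        · omega
        · omega
    · rw [le_antisymm hM h']; exact h

/-- closure of the triangulation (identity ordering). -/
theorem tri_closure {p : ℕ} (G : SimpleGraph (Fin p)) {i j m : Fin p}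
    (hmj : (m : ℕ) < (j : ℕ)) (hji : (j : ℕ) < (i : ℕ))
    (him : (triangulation (Equiv.refl (Fin p)) G).Adj i m)
    (hjm : (triangulation (Equiv.refl (Fin p)) G).Adj j m) :
    (triangulation (Equiv.refl (Fin p)) G).Adj i j := by
  have hip : (i : ℕ) < p := i.2
  have hm2 : (m : ℕ) + 1 ≤ p - 2 := by omega
  have hlab : ((Equiv.refl (Fin p)) m : ℕ) ≤ (m : ℕ) := le_rfl
  have him' : (triSeq (Equiv.refl (Fin p)) G (m : ℕ)).Adj i m :=
    myTriSeq_adj_down _ G (p - 2) (m : ℕ) (by omega) (Or.inr hlab) him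
  have hjm' : (triSeq (Equiv.refl (Fin p)) G (m : ℕ)).Adj j m :=
    myTriSeq_adj_down _ G (p - 2) (m : ℕ) (by omega) (Or.inr hlab) hjm
  have hk : (m : ℕ) < p := m.2
  have hsymm : ((Equiv.refl (Fin p)).symm ⟨(m : ℕ), hk⟩) = m := by
    simp
  have hstep : (triSeq (Equiv.refl (Fin p)) G ((m : ℕ) + 1)).Adj i j := by
    refine Or.inr ⟨Fin.ne_of_val_ne (by omega), hk, ?_, ?_, ?_, ?_⟩
    · exact hmj.trans hji
    · exact hmj
    · rw [hsymm]; exact him'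
    · rw [hsymm]; exact hjm'
  exact myTriSeq_mono (Equiv.refl (Fin p)) G hm2 hstep

end MyGBProof
section MyGBProof2

/-- Fill-in lemma: entries outside the triangulation pattern vanish. -/
theorem chol_fill {p : ℕ} (G : SimpleGraph (Fin p)) (ℓ : Fin p → Fin p → ℝ)
    (D : Fin p → ℝ) :
    ∀ j : ℕ, ∀ i : Fin p, ∀ hj : j < p, j < (i : ℕ) →
      ¬ (triangulation (Equiv.refl (Fin p)) G).Adj i ⟨j, hj⟩ →
      cholCol p G ℓ D j i = 0 := by
  intro j
  induction j using Nat.strong_induction_on with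
  | _ j IH =>
    intro i hj hji hT
    have hG : ¬ G.Adj i ⟨j, hj⟩ := fun h => hT (le_myTriangulation _ G h)
    rw [cholCol_dep G ℓ D hj hji hG]
    have hz : ∀ k ∈ (Finset.range j).attach,
        cholCol p G ℓ D k.1 i * cholCol p G ℓ D k.1 ⟨j, hj⟩ *
          D ⟨k.1, (Finset.mem_range.mp k.2).trans hj⟩ = 0 := by
      intro k _
      have hkj : k.1 < j := Finset.mem_range.mp k.2
      have hkp : k.1 < p := hkj.trans hj
      by_cases hTik : (triangulation (Equiv.refl (Fin p)) G).Adj i ⟨k.1, hkp⟩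
      · by_cases hTjk : (triangulation (Equiv.refl (Fin p)) G).Adj ⟨j, hj⟩ ⟨k.1, hkp⟩
        · exact absurd (tri_closure G (by simpa using hkj) (by simpa using hji) hTik hTjk) hT
        · rw [IH k.1 hkj ⟨j, hj⟩ hkp (by simpa using hkj) hTjk]
          ring
      · rw [IH k.1 hkj i hkp (hkj.trans hji) hTik]
        ring
    rw [Finset.sum_eq_zero hz, neg_zero, zero_div]

/-- `cholCol` column `j` row `i` only depends on `ℓ` entries with column `< j`,
or column `= j` with row `= i`. -/
theorem chol_congr {p : ℕ} (G : SimpleGraph (Fin p)) (D : Fin p → ℝ) :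
    ∀ j : ℕ, ∀ i : Fin p, ∀ ℓ₁ ℓ₂ : Fin p → Fin p → ℝ,
      (∀ u v : Fin p, ((v : ℕ) < j ∨ ((v : ℕ) = j ∧ u = i)) → ℓ₁ u v = ℓ₂ u v) →
      cholCol p G ℓ₁ D j i = cholCol p G ℓ₂ D j i := by
  intro j
  induction j using Nat.strong_induction_on with
  | _ j IH =>
    intro i ℓ₁ ℓ₂ hagree
    rw [cholCol_eq, cholCol_eq]
    by_cases hj : j < p
    · rw [dif_pos hj, dif_pos hj]
      by_cases h1 : (i : ℕ) = j
      · rw [if_pos h1, if_pos h1]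
      · rw [if_neg h1, if_neg h1]
        by_cases h2 : (i : ℕ) < j
        · rw [if_pos h2, if_pos h2]
        · rw [if_neg h2, if_neg h2]
          by_cases h3 : G.Adj i ⟨j, hj⟩
          · rw [if_pos h3, if_pos h3]
            exact hagree i ⟨j, hj⟩ (Or.inr ⟨rfl, rfl⟩)
          · rw [if_neg h3, if_neg h3]
            congr 1
            congr 1
            apply Finset.sum_congr rfl
            intro k _
            have hkj : k.1 < j := Finset.mem_range.mp k.2
            rw [IH k.1 hkj i ℓ₁ ℓ₂ (fun u v hv => hagree u v (Or.inl (by omega))),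
              IH k.1 hkj ⟨j, hj⟩ ℓ₁ ℓ₂ (fun u v hv => hagree u v (Or.inl (by omega)))]
    · rw [dif_neg hj, dif_neg hj]

/-- affine functions -/
def IsAff (F : ℝ → ℝ) : Prop := ∃ a b : ℝ, ∀ t, F t = a * t + b

theorem IsAff.const (c : ℝ) : IsAff (fun _ => c) := ⟨0, c, fun t => by ring⟩

theorem isAff_sum {α : Type*} (s : Finset α) (F : α → ℝ → ℝ)
    (h : ∀ x ∈ s, IsAff (F x)) : IsAff (fun t => ∑ x ∈ s, F x t) := by
  classical
  induction s using Finset.induction_on with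
  | empty => simpa using IsAff.const 0
  | @insert x s' hx ih =>
    obtain ⟨a, b, hab⟩ := h x (Finset.mem_insert_self x s')
    obtain ⟨c, d, hcd⟩ := ih (fun y hy => h y (Finset.mem_insert_of_mem hy))
    exact ⟨a + c, b + d, fun t => by
      show ∑ y ∈ insert x s', F y t = (a + c) * t + (b + d)
      rw [Finset.sum_insert hx, hab]
      have h2 := hcd t
      simp only [] at h2
      rw [h2]; ring⟩

/-- functions of the form `a + b / t` on `t > 0`. -/
def IsB (F : ℝ → ℝ) : Prop := ∃ a b : ℝ, ∀ t, 0 < t → F t = a + b / t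

theorem IsB.const (c : ℝ) : IsB (fun _ => c) := ⟨c, 0, fun t _ => by simp⟩

theorem isB_sum {α : Type*} (s : Finset α) (F : α → ℝ → ℝ)
    (h : ∀ x ∈ s, IsB (F x)) : IsB (fun t => ∑ x ∈ s, F x t) := by
  classical
  induction s using Finset.induction_on with
  | empty => simpa using IsB.const 0
  | @insert x s' hx ih =>
    obtain ⟨a, b, hab⟩ := h x (Finset.mem_insert_self x s')
    obtain ⟨c, d, hcd⟩ := ih (fun y hy => h y (Finset.mem_insert_of_mem hy))
    exact ⟨a + c, b + d, fun t ht => by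
      show ∑ y ∈ insert x s', F y t = (a + c) + (b + d) / t
      rw [Finset.sum_insert hx, hab t ht]
      have h2 := hcd t ht
      simp only [] at h2
      rw [h2]; ring⟩

end MyGBProof2
section MyGBProof3

theorem claimA {p : ℕ} (G : SimpleGraph (Fin p))
    (hGB : IsGBOrdering (Equiv.refl (Fin p)) G)
    (r s : Fin p) (ℓ : Fin p → Fin p → ℝ) (D : Fin p → ℝ) :
    ∀ j : ℕ, ∀ i : Fin p,
      IsAff (fun t => cholCol p G (updEntry p ℓ r s t) D j i) := by
  have hupd : ∀ (t₁ t₂ : ℝ) (u v : Fin p), ¬(u = r ∧ v = s) →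
      updEntry p ℓ r s t₁ u v = updEntry p ℓ r s t₂ u v := by
    intro t₁ t₂ u v h
    simp only [updEntry, if_neg h]
  intro j
  induction j using Nat.strong_induction_on with
  | _ j IH =>
    intro i
    by_cases hj : j < p
    swap
    · exact ⟨0, 0, fun t => by beta_reduce; rw [cholCol_eq, dif_neg hj]; ring⟩
    by_cases h1 : (i : ℕ) = j
    · exact ⟨0, 1, fun t => by
        beta_reduce; rw [cholCol_eq, dif_pos hj, if_pos h1]; ring⟩
    by_cases h2 : (i : ℕ) < j
    · exact ⟨0, 0, fun t => by
        beta_reduce; rw [cholCol_eq, dif_pos hj, if_neg h1, if_pos h2]; ring⟩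
    have hji : j < (i : ℕ) := by omega
    by_cases h3 : G.Adj i ⟨j, hj⟩
    · by_cases hP : i = r ∧ (⟨j, hj⟩ : Fin p) = s
      · exact ⟨1, 0, fun t => by
          beta_reduce
          rw [cholCol_edge G _ D hj hji h3]
          simp only [updEntry, if_pos hP]; ring⟩
      · exact ⟨0, ℓ i ⟨j, hj⟩, fun t => by
          beta_reduce
          rw [cholCol_edge G _ D hj hji h3]
          simp only [updEntry, if_neg hP]; ring⟩
    by_cases hTij : (triangulation (Equiv.refl (Fin p)) G).Adj i ⟨j, hj⟩
    swap
    · exact ⟨0, 0, fun t => by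
        beta_reduce; rw [chol_fill G _ D j i hj hji hTij]; ring⟩
    have key : ∀ k ∈ (Finset.range j).attach, IsAff (fun t =>
        cholCol p G (updEntry p ℓ r s t) D k.1 i *
          cholCol p G (updEntry p ℓ r s t) D k.1 ⟨j, hj⟩ *
          D ⟨k.1, (Finset.mem_range.mp k.2).trans hj⟩) := by
      intro k _
      have hkj : k.1 < j := Finset.mem_range.mp k.2
      have hkp : k.1 < p := hkj.trans hj
      have hki : k.1 < (i : ℕ) := hkj.trans hji
      have hkjj : k.1 < ((⟨j, hj⟩ : Fin p) : ℕ) := hkj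
      by_cases hik : G.Adj i ⟨k.1, hkp⟩
      · have e1 : ∀ t : ℝ, cholCol p G (updEntry p ℓ r s t) D k.1 i
            = updEntry p ℓ r s t i ⟨k.1, hkp⟩ :=
          fun t => cholCol_edge G _ D hkp hki hik
        by_cases hjk : G.Adj (⟨j, hj⟩ : Fin p) ⟨k.1, hkp⟩
        · have e2 : ∀ t : ℝ, cholCol p G (updEntry p ℓ r s t) D k.1 ⟨j, hj⟩
              = updEntry p ℓ r s t ⟨j, hj⟩ ⟨k.1, hkp⟩ :=
            fun t => cholCol_edge G _ D hkp hkjj hjk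
          by_cases hP1 : i = r ∧ (⟨k.1, hkp⟩ : Fin p) = s
          · have hP2 : ¬((⟨j, hj⟩ : Fin p) = r ∧ (⟨k.1, hkp⟩ : Fin p) = s) := by
              rintro ⟨h, -⟩
              exact h1 (by rw [hP1.1, ← h])
            refine ⟨ℓ ⟨j, hj⟩ ⟨k.1, hkp⟩ * D ⟨k.1, hkp⟩, 0, fun t => ?_⟩
            beta_reduce
            rw [e1 t, e2 t]
            simp only [updEntry, if_pos hP1, if_neg hP2]; ring
          · by_cases hP2 : (⟨j, hj⟩ : Fin p) = r ∧ (⟨k.1, hkp⟩ : Fin p) = s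
            · refine ⟨ℓ i ⟨k.1, hkp⟩ * D ⟨k.1, hkp⟩, 0, fun t => ?_⟩
              beta_reduce
              rw [e1 t, e2 t]
              simp only [updEntry, if_neg hP1, if_pos hP2]; ring
            · refine ⟨0, ℓ i ⟨k.1, hkp⟩ * ℓ ⟨j, hj⟩ ⟨k.1, hkp⟩ * D ⟨k.1, hkp⟩,
                fun t => ?_⟩
              beta_reduce
              rw [e1 t, e2 t]
              simp only [updEntry, if_neg hP1, if_neg hP2]; ring
        · by_cases hP1 : i = r ∧ (⟨k.1, hkp⟩ : Fin p) = s
          · have hc : ∀ t : ℝ, cholCol p G (updEntry p ℓ r s t) D k.1 ⟨j, hj⟩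
                = cholCol p G (updEntry p ℓ r s 0) D k.1 ⟨j, hj⟩ := by
              intro t
              apply chol_congr
              intro u v hv
              apply hupd
              rintro ⟨hur, hvs⟩
              obtain ⟨hir, hKs⟩ := hP1
              have hsv : (v : ℕ) = k.1 := by rw [hvs, ← hKs]
              rcases hv with hv | ⟨-, hu⟩
              · omega
              · exact h1 (by rw [hir, ← hur, hu])
            refine ⟨cholCol p G (updEntry p ℓ r s 0) D k.1 ⟨j, hj⟩ * D ⟨k.1, hkp⟩, 0,
              fun t => ?_⟩
            beta_reduce
            rw [e1 t, hc t]
            simp only [updEntry, if_pos hP1]; ring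
          · obtain ⟨a, b, hab⟩ := IH k.1 hkj ⟨j, hj⟩
            have hab' : ∀ t : ℝ, cholCol p G (updEntry p ℓ r s t) D k.1 ⟨j, hj⟩
                = a * t + b := hab
            refine ⟨ℓ i ⟨k.1, hkp⟩ * a * D ⟨k.1, hkp⟩,
              ℓ i ⟨k.1, hkp⟩ * b * D ⟨k.1, hkp⟩, fun t => ?_⟩
            beta_reduce
            rw [e1 t, hab' t]
            simp only [updEntry, if_neg hP1]; ring
      · by_cases hjk : G.Adj (⟨j, hj⟩ : Fin p) ⟨k.1, hkp⟩
        · have e2 : ∀ t : ℝ, cholCol p G (updEntry p ℓ r s t) D k.1 ⟨j, hj⟩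
              = updEntry p ℓ r s t ⟨j, hj⟩ ⟨k.1, hkp⟩ :=
            fun t => cholCol_edge G _ D hkp hkjj hjk
          by_cases hP2 : (⟨j, hj⟩ : Fin p) = r ∧ (⟨k.1, hkp⟩ : Fin p) = s
          · have hc : ∀ t : ℝ, cholCol p G (updEntry p ℓ r s t) D k.1 i
                = cholCol p G (updEntry p ℓ r s 0) D k.1 i := by
              intro t
              apply chol_congr
              intro u v hv
              apply hupd
              rintro ⟨hur, hvs⟩
              obtain ⟨hjr, hKs⟩ := hP2
              have hsv : (v : ℕ) = k.1 := by rw [hvs, ← hKs]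
              rcases hv with hv | ⟨-, hu⟩
              · omega
              · exact h1 (by rw [← hu, hur, ← hjr])
            refine ⟨cholCol p G (updEntry p ℓ r s 0) D k.1 i * D ⟨k.1, hkp⟩, 0,
              fun t => ?_⟩
            beta_reduce
            rw [e2 t, hc t]
            simp only [updEntry, if_pos hP2]; ring
          · obtain ⟨a, b, hab⟩ := IH k.1 hkj i
            have hab' : ∀ t : ℝ, cholCol p G (updEntry p ℓ r s t) D k.1 i
                = a * t + b := hab
            refine ⟨a * ℓ ⟨j, hj⟩ ⟨k.1, hkp⟩ * D ⟨k.1, hkp⟩,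
              b * ℓ ⟨j, hj⟩ ⟨k.1, hkp⟩ * D ⟨k.1, hkp⟩, fun t => ?_⟩
            beta_reduce
            rw [e2 t, hab' t]
            simp only [updEntry, if_neg hP2]; ring
        · have hnot : ¬ (triangulation (Equiv.refl (Fin p)) G).Adj i ⟨k.1, hkp⟩ ∨
              ¬ (triangulation (Equiv.refl (Fin p)) G).Adj ⟨j, hj⟩ ⟨k.1, hkp⟩ := by
            by_contra h
            push_neg at h
            exact hGB ⟨i, ⟨j, hj⟩, ⟨k.1, hkp⟩, h3, hjk, hik, hTij, h.2, h.1⟩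
          rcases hnot with hn | hn
          · refine ⟨0, 0, fun t => ?_⟩
            beta_reduce
            rw [chol_fill G _ D k.1 i hkp hki hn]; ring
          · refine ⟨0, 0, fun t => ?_⟩
            beta_reduce
            rw [chol_fill G _ D k.1 ⟨j, hj⟩ hkp hkjj hn]; ring
    obtain ⟨a, b, hab⟩ := isAff_sum _ _ key
    have hab' : ∀ t : ℝ, (∑ k ∈ (Finset.range j).attach,
        cholCol p G (updEntry p ℓ r s t) D k.1 i *
          cholCol p G (updEntry p ℓ r s t) D k.1 ⟨j, hj⟩ *
          D ⟨k.1, (Finset.mem_range.mp k.2).trans hj⟩) = a * t + b := hab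
    refine ⟨-a / D ⟨j, hj⟩, -b / D ⟨j, hj⟩, fun t => ?_⟩
    beta_reduce
    rw [cholCol_dep G _ D hj hji h3, hab' t]
    ring

end MyGBProof3
section MyGBProof4

theorem Dof_update {p : ℕ} (Dt : Fin p → ℝ) (k m : Fin p) (t : ℝ) :
    Dof p (Function.update Dt k t) m =
      if (k : ℕ) ≤ (m : ℕ) then t * ∏ l ∈ (Finset.Iic m).erase k, Dt l
      else Dof p Dt m := by
  unfold Dof
  by_cases h : (k : ℕ) ≤ (m : ℕ)
  · rw [if_pos h, Finset.prod_update_of_mem (Finset.mem_Iic.mpr (Fin.le_def.mpr h))]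
    rw [Finset.erase_eq]
  · rw [if_neg h]
    apply Finset.prod_congr rfl
    intro l hl
    apply Function.update_of_ne
    rintro rfl
    exact h (Fin.le_def.mp (Finset.mem_Iic.mp hl))

theorem constsum {α : Type*} (s : Finset α) (F : α → ℝ → ℝ)
    (h : ∀ x ∈ s, ∃ c : ℝ, ∀ t : ℝ, 0 < t → F x t = c) :
    ∃ c : ℝ, ∀ t : ℝ, 0 < t → (∑ x ∈ s, F x t) = c := by
  refine ⟨∑ x ∈ s, F x 1, fun t ht => Finset.sum_congr rfl fun x hx => ?_⟩
  obtain ⟨c, hc⟩ := h x hx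
  rw [hc t ht, hc 1 one_pos]

theorem claimB {p : ℕ} (G : SimpleGraph (Fin p))
    (hGB : IsGBOrdering (Equiv.refl (Fin p)) G)
    (k : Fin p) (ℓ : Fin p → Fin p → ℝ) (Dt : Fin p → ℝ) (hDt : ∀ k', 0 < Dt k') :
    ∀ j : ℕ, ∀ i : Fin p,
      IsB (fun t => cholCol p G ℓ (Dof p (Function.update Dt k t)) j i) ∧
      ((j < (k : ℕ)) → ∃ c : ℝ, ∀ t : ℝ, 0 < t →
        cholCol p G ℓ (Dof p (Function.update Dt k t)) j i = c) := by
  intro j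
  induction j using Nat.strong_induction_on with
  | _ j IH =>
    intro i
    have mkB : ∀ c : ℝ, (∀ t : ℝ, 0 < t →
          cholCol p G ℓ (Dof p (Function.update Dt k t)) j i = c) →
        IsB (fun t => cholCol p G ℓ (Dof p (Function.update Dt k t)) j i) ∧
        ((j < (k : ℕ)) → ∃ c' : ℝ, ∀ t : ℝ, 0 < t →
          cholCol p G ℓ (Dof p (Function.update Dt k t)) j i = c') :=
      fun c hc => ⟨⟨c, 0, fun t ht => by beta_reduce; rw [hc t ht]; simp⟩,
        fun _ => ⟨c, hc⟩⟩
    by_cases hj : j < p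
    swap
    · exact mkB 0 (fun t ht => by rw [cholCol_eq, dif_neg hj])
    by_cases h1 : (i : ℕ) = j
    · exact mkB 1 (fun t ht => by rw [cholCol_eq, dif_pos hj, if_pos h1])
    by_cases h2 : (i : ℕ) < j
    · exact mkB 0 (fun t ht => by rw [cholCol_eq, dif_pos hj, if_neg h1, if_pos h2])
    have hji : j < (i : ℕ) := by omega
    by_cases h3 : G.Adj i ⟨j, hj⟩
    · exact mkB (ℓ i ⟨j, hj⟩) (fun t ht => cholCol_edge G ℓ _ hj hji h3)
    by_cases hTij : (triangulation (Equiv.refl (Fin p)) G).Adj i ⟨j, hj⟩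
    swap
    · exact mkB 0 (fun t ht => chol_fill G ℓ _ j i hj hji hTij)
    by_cases hjlt : j < (k : ℕ)
    · -- all relevant data is independent of t
      have hterm : ∀ m ∈ (Finset.range j).attach, ∃ c : ℝ, ∀ t : ℝ, 0 < t →
          cholCol p G ℓ (Dof p (Function.update Dt k t)) m.1 i *
            cholCol p G ℓ (Dof p (Function.update Dt k t)) m.1 ⟨j, hj⟩ *
            Dof p (Function.update Dt k t)
              ⟨m.1, (Finset.mem_range.mp m.2).trans hj⟩ = c := by
        intro m _
        have hmj : m.1 < j := Finset.mem_range.mp m.2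
        have hmp : m.1 < p := hmj.trans hj
        have hmk : m.1 < (k : ℕ) := hmj.trans hjlt
        obtain ⟨c1, hc1⟩ := (IH m.1 hmj i).2 hmk
        obtain ⟨c2, hc2⟩ := (IH m.1 hmj ⟨j, hj⟩).2 hmk
        refine ⟨c1 * c2 * Dof p Dt ⟨m.1, hmp⟩, fun t ht => ?_⟩
        rw [hc1 t ht, hc2 t ht, Dof_update, if_neg (show ¬((k : ℕ) ≤ m.1) by omega)]
      obtain ⟨c, hc⟩ := constsum _ _ hterm
      refine mkB (-c / Dof p Dt ⟨j, hj⟩) (fun t ht => ?_)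
      rw [cholCol_dep G ℓ _ hj hji h3, hc t ht, Dof_update, if_neg (show ¬((k : ℕ) ≤ j) by omega)]
    · -- k ≤ j
      have hkj : (k : ℕ) ≤ j := by omega
      set cj : ℝ := ∏ l ∈ (Finset.Iic (⟨j, hj⟩ : Fin p)).erase k, Dt l with hcjdef
      have hcj : 0 < cj := Finset.prod_pos (fun l _ => hDt l)
      have hDj : ∀ t : ℝ, Dof p (Function.update Dt k t) ⟨j, hj⟩ = t * cj := by
        intro t
        rw [Dof_update, if_pos hkj]
      have hterm : ∀ m ∈ (Finset.range j).attach, IsB (fun t =>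
          cholCol p G ℓ (Dof p (Function.update Dt k t)) m.1 i *
            cholCol p G ℓ (Dof p (Function.update Dt k t)) m.1 ⟨j, hj⟩ *
            Dof p (Function.update Dt k t)
              ⟨m.1, (Finset.mem_range.mp m.2).trans hj⟩ / (t * cj)) := by
        intro m _
        have hmj : m.1 < j := Finset.mem_range.mp m.2
        have hmp : m.1 < p := hmj.trans hj
        have hmi : m.1 < (i : ℕ) := hmj.trans hji
        have hmjj : m.1 < ((⟨j, hj⟩ : Fin p) : ℕ) := hmj
        by_cases hmk : m.1 < (k : ℕ)
        · -- everything constant except the trailing 1/t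
          obtain ⟨c1, hc1⟩ := (IH m.1 hmj i).2 hmk
          obtain ⟨c2, hc2⟩ := (IH m.1 hmj ⟨j, hj⟩).2 hmk
          refine ⟨0, c1 * c2 * Dof p Dt ⟨m.1, hmp⟩ / cj, fun t ht => ?_⟩
          beta_reduce
          rw [hc1 t ht, hc2 t ht, Dof_update, if_neg (show ¬((k : ℕ) ≤ m.1) by omega),
            zero_add, div_div, mul_comm cj t]
        · have hkm : (k : ℕ) ≤ m.1 := by omega
          have hDm : ∀ t : ℝ, Dof p (Function.update Dt k t)
              ⟨m.1, (Finset.mem_range.mp m.2).trans hj⟩ =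
              t * ∏ l ∈ (Finset.Iic (⟨m.1, hmp⟩ : Fin p)).erase k, Dt l := by
            intro t
            rw [Dof_update, if_pos hkm]
          set cm : ℝ := ∏ l ∈ (Finset.Iic (⟨m.1, hmp⟩ : Fin p)).erase k, Dt l
          by_cases hik : G.Adj i ⟨m.1, hmp⟩
          · have e1 : ∀ t : ℝ, cholCol p G ℓ (Dof p (Function.update Dt k t)) m.1 i
                = ℓ i ⟨m.1, hmp⟩ := fun t => cholCol_edge G ℓ _ hmp hmi hik
            by_cases hjk : G.Adj (⟨j, hj⟩ : Fin p) ⟨m.1, hmp⟩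
            · have e2 : ∀ t : ℝ,
                  cholCol p G ℓ (Dof p (Function.update Dt k t)) m.1 ⟨j, hj⟩
                  = ℓ ⟨j, hj⟩ ⟨m.1, hmp⟩ := fun t => cholCol_edge G ℓ _ hmp hmjj hjk
              refine ⟨ℓ i ⟨m.1, hmp⟩ * ℓ ⟨j, hj⟩ ⟨m.1, hmp⟩ * cm / cj, 0,
                fun t ht => ?_⟩
              beta_reduce
              rw [e1 t, e2 t, hDm t]
              field_simp [ht.ne', hcj.ne']
              ring
            · obtain ⟨a2, b2, hab2⟩ := (IH m.1 hmj ⟨j, hj⟩).1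
              have hab2' : ∀ t : ℝ, 0 < t →
                  cholCol p G ℓ (Dof p (Function.update Dt k t)) m.1 ⟨j, hj⟩
                  = a2 + b2 / t := hab2
              refine ⟨ℓ i ⟨m.1, hmp⟩ * a2 * cm / cj,
                ℓ i ⟨m.1, hmp⟩ * b2 * cm / cj, fun t ht => ?_⟩
              beta_reduce
              rw [e1 t, hab2' t ht, hDm t]
              field_simp [ht.ne', hcj.ne']
          · by_cases hjk : G.Adj (⟨j, hj⟩ : Fin p) ⟨m.1, hmp⟩
            · have e2 : ∀ t : ℝ,
                  cholCol p G ℓ (Dof p (Function.update Dt k t)) m.1 ⟨j, hj⟩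
                  = ℓ ⟨j, hj⟩ ⟨m.1, hmp⟩ := fun t => cholCol_edge G ℓ _ hmp hmjj hjk
              obtain ⟨a1, b1, hab1⟩ := (IH m.1 hmj i).1
              have hab1' : ∀ t : ℝ, 0 < t →
                  cholCol p G ℓ (Dof p (Function.update Dt k t)) m.1 i
                  = a1 + b1 / t := hab1
              refine ⟨a1 * ℓ ⟨j, hj⟩ ⟨m.1, hmp⟩ * cm / cj,
                b1 * ℓ ⟨j, hj⟩ ⟨m.1, hmp⟩ * cm / cj, fun t ht => ?_⟩
              beta_reduce
              rw [e2 t, hab1' t ht, hDm t]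
              field_simp [ht.ne', hcj.ne']
            · have hnot :
                  ¬ (triangulation (Equiv.refl (Fin p)) G).Adj i ⟨m.1, hmp⟩ ∨
                  ¬ (triangulation (Equiv.refl (Fin p)) G).Adj ⟨j, hj⟩ ⟨m.1, hmp⟩ := by
                by_contra h
                push_neg at h
                exact hGB ⟨i, ⟨j, hj⟩, ⟨m.1, hmp⟩, h3, hjk, hik, hTij, h.2, h.1⟩
              rcases hnot with hn | hn
              · refine ⟨0, 0, fun t ht => ?_⟩
                beta_reduce
                rw [chol_fill G ℓ _ m.1 i hmp hmi hn]
                ring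
              · refine ⟨0, 0, fun t ht => ?_⟩
                beta_reduce
                rw [chol_fill G ℓ _ m.1 ⟨j, hj⟩ hmp hmjj hn]
                ring
      obtain ⟨a, b, hab⟩ := isB_sum _ _ hterm
      have hab' : ∀ t : ℝ, 0 < t → (∑ m ∈ (Finset.range j).attach,
          cholCol p G ℓ (Dof p (Function.update Dt k t)) m.1 i *
            cholCol p G ℓ (Dof p (Function.update Dt k t)) m.1 ⟨j, hj⟩ *
            Dof p (Function.update Dt k t)
              ⟨m.1, (Finset.mem_range.mp m.2).trans hj⟩ / (t * cj)) = a + b / t := hab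
      refine ⟨⟨-a, -b, fun t ht => ?_⟩, fun h => absurd h hjlt⟩
      beta_reduce
      rw [cholCol_dep G ℓ _ hj hji h3, hDj t, neg_div, Finset.sum_div, hab' t ht]
      ring

end MyGBProof4
/-- Lemma: Generalized Bartlett implies Property-A and Property-B.  If the
identity ordering is a Generalized Bartlett ordering of `G`, then `G` (with the identity
ordering) satisfies both Property-A and Property-B. -/
theorem propertyA_and_propertyB_of_isGBOrdering (p : ℕ) (G : SimpleGraph (Fin p))
    (hGB : IsGBOrdering (Equiv.refl (Fin p)) G) :
    PropertyA p G ∧ PropertyB p G := by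
  constructor
  · intro i j hji hA r s hsr hrs ℓ Dt hDt
    obtain ⟨a, b, hab⟩ := claimA G hGB r s ℓ (Dof p Dt) (j : ℕ) i
    exact ⟨a, b, hab⟩
  · intro i j hji hA k ℓ Dt hDt
    obtain ⟨⟨a, b, hab⟩, -⟩ := claimB G hGB k ℓ Dt hDt (j : ℕ) i
    exact ⟨a, b, hab⟩
end

section
/- (Theorem on maximality: Property-A and Property-B imply Generalized Bartlett.) Let G be a graph on {1,…,p} with edge set E. If G (with the identity ordering) satisfies both Property-A and Property-B, then the identity ordering is a Generalized Bartlett ordering of G; in particular G is a Generalized Bartlett graph. -/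
open SimpleGraph

variable {V : Type*}

open scoped Classical BigOperators

open SimpleGraph Finset in
lemma cholCol_unfold (p : ℕ) (G : SimpleGraph (Fin p)) (ℓ : Fin p → Fin p → ℝ)
    (D : Fin p → ℝ) (j : ℕ) (hj : j < p) (i : Fin p) :
    cholCol p G ℓ D j i =
      if (i : ℕ) = j then 1
      else if (i : ℕ) < j then 0
      else if G.Adj i ⟨j, hj⟩ then ℓ i ⟨j, hj⟩
      else -(∑ k ∈ (Finset.range j).attach,
          cholCol p G ℓ D k.1 i * cholCol p G ℓ D k.1 ⟨j, hj⟩ *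
            D ⟨k.1, (Finset.mem_range.mp k.2).trans hj⟩) / D ⟨j, hj⟩ := by
  rw [cholCol]
  simp [hj]
open Finset in
lemma cholCol_of_ge (p : ℕ) (G : SimpleGraph (Fin p)) (ℓ : Fin p → Fin p → ℝ)
    (D : Fin p → ℝ) (j : ℕ) (hj : ¬ j < p) (i : Fin p) :
    cholCol p G ℓ D j i = 0 := by
  rw [cholCol]; simp [hj]

/-- A walk of positive length from `a` to `b` along relation `R` whose interior
vertices all have label `< c`. -/
def LowWalk {p : ℕ} (R : Fin p → Fin p → Prop) (c : ℕ) (a b : Fin p) : Prop :=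
  ∃ n : ℕ, 0 < n ∧ ∃ x : ℕ → Fin p, x 0 = a ∧ x n = b ∧
    (∀ i, i < n → R (x i) (x (i+1))) ∧ ∀ i, 0 < i → i < n → (x i : ℕ) < c

lemma LowWalk.symm {p : ℕ} {R : Fin p → Fin p → Prop} (hR : Symmetric R) {c : ℕ}
    {a b : Fin p} (h : LowWalk R c a b) : LowWalk R c b a := by
  obtain ⟨n, hn, x, h0, hn', hadj, hint⟩ := h
  refine ⟨n, hn, fun i => x (n - i), by simp [hn'], by simp [h0], ?_, ?_⟩
  · intro i hi
    have h1 : n - i = (n - (i+1)) + 1 := by omega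
    show R (x (n - i)) (x (n - (i+1)))
    rw [h1]
    exact hR (hadj (n - (i+1)) (by omega))
  · intro i hi1 hi2
    exact hint (n - i) (by omega) (by omega)

lemma LowWalk.mono {p : ℕ} {R : Fin p → Fin p → Prop} {c c' : ℕ}
    {a b : Fin p} (hcc : c ≤ c') (h : LowWalk R c a b) : LowWalk R c' a b := by
  obtain ⟨n, hn, x, h0, hn', hadj, hint⟩ := h
  exact ⟨n, hn, x, h0, hn', hadj, fun i h1 h2 => lt_of_lt_of_le (hint i h1 h2) hcc⟩

lemma LowWalk.trans {p : ℕ} {R : Fin p → Fin p → Prop} {c : ℕ} {a k b : Fin p}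
    (h1 : LowWalk R c a k) (h2 : LowWalk R c k b) (hk : (k : ℕ) < c) :
    LowWalk R c a b := by
  obtain ⟨n1, hn1, x, hx0, hxn, hxadj, hxint⟩ := h1
  obtain ⟨n2, hn2, y, hy0, hyn, hyadj, hyint⟩ := h2
  refine ⟨n1 + n2, by omega, fun i => if i < n1 then x i else y (i - n1), by simp [hn1, hx0], ?_, ?_, ?_⟩
  · simp only [if_neg (by omega : ¬ n1 + n2 < n1)]
    rw [(by omega : n1 + n2 - n1 = n2)]; exact hyn
  · intro i hi
    by_cases h : i + 1 < n1
    · simp only [if_pos (by omega : i < n1), if_pos h]; exact hxadj i (by omega)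
    · by_cases h' : i < n1
      · have hi1 : i + 1 = n1 := by omega
        simp only [if_pos h', if_neg (by omega : ¬ i + 1 < n1)]
        rw [hi1, (by omega : n1 - n1 = 0), hy0, ← hxn, ← hi1]
        exact hxadj i (by omega)
      · simp only [if_neg h', if_neg (by omega : ¬ i + 1 < n1)]
        rw [(by omega : i + 1 - n1 = (i - n1) + 1)]
        exact hyadj (i - n1) (by omega)
  · intro i hi1 hi2
    by_cases h : i < n1
    · simp only [if_pos h]; exact hxint i hi1 h
    · simp only [if_neg h]
      rcases Nat.eq_or_lt_of_le (Nat.le_of_not_lt h) with he | hlt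
      · rw [← he, Nat.sub_self, hy0]; exact hk
      · exact hyint (i - n1) (by omega) (by omega)

lemma lowWalk_single {p : ℕ} {R : Fin p → Fin p → Prop} {c : ℕ} {a b : Fin p}
    (h : R a b) : LowWalk R c a b :=
  ⟨1, one_pos, fun i => if i = 0 then a else b, by simp, by simp, by
    intro i hi; simp [Nat.lt_one_iff.mp hi, h], by omega⟩

open SimpleGraph in
lemma triSeq_adj_lowWalk {p : ℕ} (G : SimpleGraph (Fin p)) (m : ℕ) (a b : Fin p)
    (h : (triSeq (Equiv.refl (Fin p)) G m).Adj a b) :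
    LowWalk G.Adj (min (a : ℕ) (b : ℕ)) a b := by
  induction m generalizing a b with
  | zero => exact lowWalk_single h
  | succ m IH =>
    rcases h with h | ⟨hne, hk, h1, h2, h3, h4⟩
    · exact IH a b h
    · simp only [Equiv.refl_symm, Equiv.refl_apply] at h1 h2 h3 h4
      have hwa := IH a ⟨m, hk⟩ h3
      have hwb := IH b ⟨m, hk⟩ h4
      have hm : m < min (a : ℕ) (b : ℕ) := by
        simp only [lt_min_iff]; exact ⟨h1, h2⟩
      have hwa' : LowWalk G.Adj (min (a : ℕ) (b : ℕ)) a ⟨m, hk⟩ :=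
        hwa.mono (by simp; omega)
      have hwb' : LowWalk G.Adj (min (a : ℕ) (b : ℕ)) b ⟨m, hk⟩ :=
        hwb.mono (by simp; omega)
      exact hwa'.trans (hwb'.symm (fun _ _ h => h.symm)) hm
open Finset in
lemma cholCol_congr_D {p : ℕ} (G : SimpleGraph (Fin p)) (ℓ : Fin p → Fin p → ℝ) :
    ∀ (j : ℕ) (D D' : Fin p → ℝ), (∀ k : Fin p, (k : ℕ) ≤ j → D k = D' k) →
      ∀ i : Fin p, cholCol p G ℓ D j i = cholCol p G ℓ D' j i := by
  intro j
  induction j using Nat.strong_induction_on with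
  | _ j IH =>
    intro D D' h i
    by_cases hj : j < p
    · rw [cholCol_unfold p G ℓ D j hj, cholCol_unfold p G ℓ D' j hj]
      by_cases h1 : (i : ℕ) = j
      · simp [h1]
      · rw [if_neg h1, if_neg h1]
        by_cases h2 : (i : ℕ) < j
        · simp [h2]
        · rw [if_neg h2, if_neg h2]
          by_cases h3 : G.Adj i ⟨j, hj⟩
          · simp [h3]
          · rw [if_neg h3, if_neg h3]
            rw [h ⟨j, hj⟩ (le_refl j)]
            congr 2
            refine Finset.sum_congr rfl (fun k _ => ?_)
            have hk := Finset.mem_range.mp k.2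
            rw [IH k.1 hk D D' (fun k' hk' => h k' (by omega)),
              IH k.1 hk D D' (fun k' hk' => h k' (by omega)),
              h ⟨k.1, hk.trans hj⟩ (by simpa using hk.le)]
    · rw [cholCol_of_ge p G ℓ D j hj, cholCol_of_ge p G ℓ D' j hj]

open Finset in
lemma cholCol_eq_zero_of_not_lowWalk {p : ℕ} (G : SimpleGraph (Fin p))
    (ℓ : Fin p → Fin p → ℝ) (D : Fin p → ℝ) (R : Fin p → Fin p → Prop)
    (hR : Symmetric R) (hl : ∀ a b : Fin p, ¬ R a b → ℓ a b = 0) :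
    ∀ (j : ℕ) (hj : j < p) (i : Fin p), j < (i : ℕ) →
      ¬ LowWalk R j i ⟨j, hj⟩ → cholCol p G ℓ D j i = 0 := by
  intro j
  induction j using Nat.strong_induction_on with
  | _ j IH =>
    intro hj i hij hnw
    rw [cholCol_unfold p G ℓ D j hj, if_neg (by omega), if_neg (by omega)]
    by_cases h3 : G.Adj i ⟨j, hj⟩
    · rw [if_pos h3]
      refine hl _ _ (fun hr => hnw (lowWalk_single hr))
    · rw [if_neg h3]
      have hsum : ∀ k ∈ (Finset.range j).attach,
          cholCol p G ℓ D k.1 i * cholCol p G ℓ D k.1 ⟨j, hj⟩ *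
            D ⟨k.1, (Finset.mem_range.mp k.2).trans hj⟩ = 0 := by
        intro k _
        have hk := Finset.mem_range.mp k.2
        by_contra hne
        have hne1 : cholCol p G ℓ D k.1 i ≠ 0 := fun h => hne (by rw [h]; ring)
        have hne2 : cholCol p G ℓ D k.1 ⟨j, hj⟩ ≠ 0 := fun h => hne (by rw [h]; ring)
        have hw1 : LowWalk R k.1 i ⟨k.1, hk.trans hj⟩ := by
          by_contra hc
          exact hne1 (IH k.1 hk (hk.trans hj) i (by omega) hc)
        have hw2 : LowWalk R k.1 ⟨j, hj⟩ ⟨k.1, hk.trans hj⟩ := by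
          by_contra hc
          exact hne2 (IH k.1 hk (hk.trans hj) ⟨j, hj⟩ (by simpa using hk) hc)
        exact hnw ((hw1.mono hk.le).trans ((hw2.mono hk.le).symm hR) (by simpa using hk))
      rw [Finset.sum_eq_zero hsum]
      simp

lemma nat_ivt : ∀ (m : ℕ) (f : ℕ → ℕ),
    (∀ i, i < m → f (i+1) = f i + 1 ∨ f i = f (i+1) + 1) →
    ∀ q, f 0 ≤ q → q ≤ f m → ∃ i, i ≤ m ∧ f i = q := by
  intro m
  induction m with
  | zero => intro f _ q h1 h2; exact ⟨0, le_rfl, by omega⟩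
  | succ m IH =>
    intro f hf q h0 hm
    rcases Nat.eq_or_lt_of_le h0 with he | hlt
    · exact ⟨0, by omega, he⟩
    · have step : f 1 = f 0 + 1 ∨ f 0 = f 1 + 1 := by simpa using hf 0 (by omega)
      obtain ⟨i, hi, hq⟩ := IH (fun i => f (i+1))
        (fun i hi => hf (i+1) (by omega)) q (by simpa using (show f 1 ≤ q by omega)) hm
      exact ⟨i+1, by omega, hq⟩

/-- The consecutive-pairs relation of an indexed path. -/
def Rpath {p : ℕ} (x : ℕ → Fin p) (n : ℕ) (a b : Fin p) : Prop :=
  ∃ r, r < n ∧ ((a = x r ∧ b = x (r+1)) ∨ (b = x r ∧ a = x (r+1)))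

lemma Rpath_symm {p : ℕ} (x : ℕ → Fin p) (n : ℕ) : Symmetric (Rpath x n) := by
  rintro a b ⟨r, hr, h | h⟩
  · exact ⟨r, hr, Or.inr h⟩
  · exact ⟨r, hr, Or.inl h⟩

lemma lowWalk_rpath_endpoint {p : ℕ} {x : ℕ → Fin p} {n c : ℕ} {a b : Fin p}
    (h : LowWalk (Rpath x n) c a b) : ∃ r, r ≤ n ∧ b = x r := by
  obtain ⟨m, hm, z, hz0, hzm, hadj, hint⟩ := h
  obtain ⟨r, hr, hc | hc⟩ := hadj (m-1) (by omega)
  · rw [← hzm, (by omega : m = (m-1)+1)]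
    exact ⟨r+1, by omega, hc.2⟩
  · rw [← hzm, (by omega : m = (m-1)+1)]
    exact ⟨r, by omega, hc.1⟩

lemma lowWalk_path_cover {p : ℕ} (x : ℕ → Fin p) (n : ℕ)
    (hinj : ∀ r r', r ≤ n → r' ≤ n → x r = x r' → r = r')
    (s t : ℕ) (hs : s ≤ n) (ht : t ≤ n) (hst : s < t) (c : ℕ)
    (hw : LowWalk (Rpath x n) c (x s) (x t)) :
    ∀ q, s < q → q < t → (x q : ℕ) < c := by
  intro q hq1 hq2
  obtain ⟨m, hm, z, hz0, hzm, hadj, hint⟩ := hw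
  have hpos : ∀ i, ∃ r, r ≤ n ∧ (i ≤ m → z i = x r) := by
    intro i
    by_cases hi : i ≤ m
    · rcases Nat.eq_or_lt_of_le hi with he | hlt
      · exact ⟨t, ht, fun _ => by rw [he, hzm]⟩
      · obtain ⟨r, hr, hc | hc⟩ := hadj i hlt
        · exact ⟨r, by omega, fun _ => hc.1⟩
        · exact ⟨r+1, by omega, fun _ => hc.2⟩
    · exact ⟨s, hs, fun h => absurd h hi⟩
  choose pos hposn hposz using hpos
  have hp0 : pos 0 = s := hinj _ _ (hposn 0) hs (by rw [← hposz 0 (by omega), hz0])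
  have hpm : pos m = t := hinj _ _ (hposn m) ht (by rw [← hposz m le_rfl, hzm])
  have hstep : ∀ i, i < m → pos (i+1) = pos i + 1 ∨ pos i = pos (i+1) + 1 := by
    intro i hi
    obtain ⟨r, hr, hc | hc⟩ := hadj i hi
    · left
      have e1 : pos i = r := hinj _ _ (hposn i) (by omega) (by rw [← hposz i (by omega), hc.1])
      have e2 : pos (i+1) = r + 1 := hinj _ _ (hposn (i+1)) (by omega)
        (by rw [← hposz (i+1) (by omega), hc.2])
      omega
    · right
      have e1 : pos (i+1) = r := hinj _ _ (hposn (i+1)) (by omega)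
        (by rw [← hposz (i+1) (by omega), hc.1])
      have e2 : pos i = r + 1 := hinj _ _ (hposn i) (by omega)
        (by rw [← hposz i (by omega), hc.2])
      omega
  obtain ⟨i, him, hiq⟩ := nat_ivt m pos hstep q (by omega) (by omega)
  have hzi : z i = x q := by rw [hposz i him, hiq]
  have hi0 : i ≠ 0 := by
    intro h; rw [h] at hiq; omega
  have him' : i ≠ m := by
    intro h; rw [h] at hiq; omega
  have := hint i (by omega) (by omega)
  rwa [hzi] at this
open Finset in
lemma cholCol_path {p : ℕ} (G : SimpleGraph (Fin p)) (x : ℕ → Fin p) (n : ℕ)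
    (hinj : ∀ r r', r ≤ n → r' ≤ n → x r = x r' → r = r')
    (hadjG : ∀ r, r < n → G.Adj (x r) (x (r+1)))
    (hchord : ∀ r r', r + 1 < r' → r' ≤ n → ¬ G.Adj (x r) (x r')) :
    ∀ (d s t : ℕ), t - s = d → s < t → t ≤ n →
      (∀ q, s < q → q < t → (x q : ℕ) < min (x s : ℕ) (x t : ℕ)) →
      cholCol p G (fun a b => if Rpath x n a b then (1:ℝ) else 0) (fun _ => 1)
        (min (x s : ℕ) (x t : ℕ)) (if (x s : ℕ) < (x t : ℕ) then x t else x s)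
        = (-1 : ℝ) ^ (t - s - 1) := by
  intro d
  induction d using Nat.strong_induction_on with
  | _ d IH =>
  intro s t hd hst htn hgood
  have hxne : (x s : ℕ) ≠ (x t : ℕ) := fun h => by
    have := hinj s t (by omega) htn (Fin.ext h); omega
  have hj : min (x s : ℕ) (x t : ℕ) < p := lt_of_le_of_lt (min_le_left _ _) (x s).isLt
  set ℓ : Fin p → Fin p → ℝ := fun a b => if Rpath x n a b then (1:ℝ) else 0 with hℓ
  set j := min (x s : ℕ) (x t : ℕ) with hjdef
  set M : Fin p := if (x s : ℕ) < (x t : ℕ) then x t else x s with hM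
  have horient : (M = x s ∧ (⟨j, hj⟩ : Fin p) = x t) ∨
      (M = x t ∧ (⟨j, hj⟩ : Fin p) = x s) := by
    by_cases hc : (x s : ℕ) < (x t : ℕ)
    · right
      constructor
      · rw [hM, if_pos hc]
      · apply Fin.ext
        simp only [hjdef]
        omega
    · left
      constructor
      · rw [hM, if_neg hc]
      · apply Fin.ext
        simp only [hjdef]
        omega
  have hjM : j < (M : ℕ) := by
    rcases horient with ⟨h1, h2⟩ | ⟨h1, h2⟩ <;>
      [(rw [h1]; have := congrArg Fin.val h2); (rw [h1]; have := congrArg Fin.val h2)] <;>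
      simp at this <;> omega
  rw [cholCol_unfold p G ℓ _ j hj, if_neg (by omega), if_neg (by omega)]
  rcases Nat.lt_or_ge (s+1) t with hlen | hlen
  swap
  · -- base case : t = s + 1, an edge of the path
    have hts : t = s + 1 := by omega
    have hadj : G.Adj M ⟨j, hj⟩ := by
      have h0 := hadjG s (by omega)
      rw [← hts] at h0
      rcases horient with ⟨h1, h2⟩ | ⟨h1, h2⟩ <;> rw [h1, h2]
      · exact h0
      · exact h0.symm
    rw [if_pos hadj]
    have hR : Rpath x n M ⟨j, hj⟩ := by
      refine ⟨s, by omega, ?_⟩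
      rcases horient with ⟨h1, h2⟩ | ⟨h1, h2⟩ <;> rw [h1, h2, ← hts]
      · exact Or.inl ⟨rfl, rfl⟩
      · exact Or.inr ⟨rfl, rfl⟩
    simp only [hℓ, if_pos hR, hts]
    norm_num
  · -- inductive case
    have hnadj : ¬ G.Adj M ⟨j, hj⟩ := by
      have h0 := hchord s t hlen htn
      rcases horient with ⟨h1, h2⟩ | ⟨h1, h2⟩ <;> rw [h1, h2]
      · exact h0
      · exact fun h => h0 h.symm
    rw [if_neg hnadj]
    -- the peak interior vertex
    obtain ⟨rs, hrsmem, hrsmax⟩ := Finset.exists_max_image (Finset.Ioo s t)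
      (fun q => (x q : ℕ)) ⟨s+1, Finset.mem_Ioo.mpr ⟨by omega, by omega⟩⟩
    rw [Finset.mem_Ioo] at hrsmem
    have hrj : (x rs : ℕ) < j := hgood rs hrsmem.1 hrsmem.2
    have hxrsle : ∀ q, s < q → q < t → (x q : ℕ) ≤ (x rs : ℕ) := fun q h1 h2 =>
      hrsmax q (Finset.mem_Ioo.mpr ⟨h1, h2⟩)
    -- values from the induction hypothesis
    have IH1 : cholCol p G ℓ (fun _ => 1) ((x rs : ℕ)) (x s) = (-1:ℝ) ^ (rs - s - 1) := by
      have h0 := IH (rs - s) (by omega) s rs rfl hrsmem.1 (by omega) ?_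
      · rwa [min_eq_right (by omega : (x rs : ℕ) ≤ (x s : ℕ)),
          if_neg (by omega : ¬ (x s : ℕ) < (x rs : ℕ))] at h0
      · intro q h1 h2
        have hle := hxrsle q h1 (by omega)
        have : x q ≠ x rs := fun h => by
          have := hinj q rs (by omega) (by omega) h; omega
        have : (x q : ℕ) ≠ (x rs : ℕ) := fun h => this (Fin.ext h)
        omega
    have IH2 : cholCol p G ℓ (fun _ => 1) ((x rs : ℕ)) (x t) = (-1:ℝ) ^ (t - rs - 1) := by
      have h0 := IH (t - rs) (by omega) rs t rfl hrsmem.2 htn ?_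
      · rwa [min_eq_left (by omega : (x rs : ℕ) ≤ (x t : ℕ)),
          if_pos (by omega : (x rs : ℕ) < (x t : ℕ))] at h0
      · intro q h1 h2
        have hle := hxrsle q (by omega) h2
        have : x q ≠ x rs := fun h => by
          have := hinj q rs (by omega) (by omega) h; omega
        have : (x q : ℕ) ≠ (x rs : ℕ) := fun h => this (Fin.ext h)
        omega
    -- all other columns contribute zero
    have hzero : ∀ b ∈ (Finset.range j).attach,
        b ≠ (⟨(x rs : ℕ), Finset.mem_range.mpr hrj⟩ : {k // k ∈ Finset.range j}) →
        cholCol p G ℓ (fun _ => 1) b.1 M * cholCol p G ℓ (fun _ => 1) b.1 ⟨j, hj⟩ *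
          (fun _ => (1:ℝ)) (⟨b.1, (Finset.mem_range.mp b.2).trans hj⟩ : Fin p) = 0 := by
      rintro ⟨k, hkr⟩ _ hbne
      have hk : k < j := Finset.mem_range.mp hkr
      have hkp : k < p := hk.trans hj
      have hkne : k ≠ (x rs : ℕ) := fun h => hbne (Subtype.ext h)
      simp only []
      by_contra hne
      have hne1 : cholCol p G ℓ (fun _ => 1) k M ≠ 0 := fun h => hne (by rw [h]; ring)
      have hne2 : cholCol p G ℓ (fun _ => 1) k ⟨j, hj⟩ ≠ 0 := fun h => hne (by rw [h]; ring)
      have hls : ∀ a b : Fin p, ¬ Rpath x n a b → ℓ a b = 0 := fun a b h => by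
        simp only [hℓ, if_neg h]
      have hw1 : LowWalk (Rpath x n) k M ⟨k, hkp⟩ := by
        by_contra hc
        exact hne1 (cholCol_eq_zero_of_not_lowWalk G ℓ (fun _ => 1) (Rpath x n)
          (Rpath_symm x n) hls k hkp M (by omega) hc)
      have hw2 : LowWalk (Rpath x n) k ⟨j, hj⟩ ⟨k, hkp⟩ := by
        by_contra hc
        exact hne2 (cholCol_eq_zero_of_not_lowWalk G ℓ (fun _ => 1) (Rpath x n)
          (Rpath_symm x n) hls k hkp ⟨j, hj⟩ (by omega) hc)
      -- so k is a path vertex x q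
      obtain ⟨q, hqn, hq⟩ := lowWalk_rpath_endpoint hw1
      have hkq : (x q : ℕ) = k := by rw [← hq]
      -- walks from x s and from x t to x q, with interiors < k
      have hws : LowWalk (Rpath x n) k (x s) (x q) := by
        rcases horient with ⟨h1, h2⟩ | ⟨h1, h2⟩
        · rw [← h1, ← hq]; exact hw1
        · rw [← h2, ← hq]; exact hw2
      have hwt : LowWalk (Rpath x n) k (x t) (x q) := by
        rcases horient with ⟨h1, h2⟩ | ⟨h1, h2⟩
        · rw [← h2, ← hq]; exact hw2
        · rw [← h1, ← hq]; exact hw1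
      have hqs : q ≠ s := fun h => by rw [h] at hkq; omega
      have hqt : q ≠ t := fun h => by rw [h] at hkq; omega
      have hjs : j ≤ (x s : ℕ) := min_le_left _ _
      have hjt : j ≤ (x t : ℕ) := min_le_right _ _
      rcases Nat.lt_or_ge q s with hqlt | hqge
      · -- q < s : the walk from x t to x q covers s, contradiction
        have := lowWalk_path_cover x n hinj q t hqn htn (by omega) k
          (hwt.symm (Rpath_symm x n)) s hqlt hst
        omega
      · rcases Nat.lt_or_ge t q with hqgt | hqle
        · -- t < q : the walk from x s to x q covers t, contradiction
          have := lowWalk_path_cover x n hinj s q (by omega) hqn (by omega) k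
            hws t hst hqgt
          omega
        · -- s ≤ q ≤ t, and q ≠ s, t : q is interior, q ≠ rs
          have hq1 : s < q := by omega
          have hq2 : q < t := by omega
          have hqrs : q ≠ rs := fun h => by rw [h] at hkq; omega
          have hkle : k ≤ (x rs : ℕ) := by
            have := hxrsle q hq1 hq2; omega
          rcases Nat.lt_or_ge rs q with hrq | hrq
          · have := lowWalk_path_cover x n hinj s q (by omega) hqn hq1 k
              hws rs (by omega) hrq
            omega
          · have := lowWalk_path_cover x n hinj q t hqn htn hq2 k
              (hwt.symm (Rpath_symm x n)) rs (by omega) (by omega)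
            omega
    rw [Finset.sum_eq_single_of_mem
      (⟨(x rs : ℕ), Finset.mem_range.mpr hrj⟩ : {k // k ∈ Finset.range j})
      (Finset.mem_attach _ _) hzero]
    have hexp : (rs - s - 1) + (t - rs - 1) = t - s - 2 := by omega
    have hpow : (-1:ℝ)^(t-s-1) = -(-1:ℝ)^(t-s-2) := by
      rw [show t-s-1 = (t-s-2)+1 by omega, pow_succ]; ring
    rcases horient with ⟨h1, h2⟩ | ⟨h1, h2⟩ <;> rw [h1, h2] <;>
      simp only [IH1, IH2] <;>
      rw [hpow, ← hexp, pow_add] <;> ring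
open Finset Polynomial in
lemma cholCol_poly {p : ℕ} (G : SimpleGraph (Fin p)) (χ1 χ2 : Fin p → Fin p → ℝ)
    (D : Fin p → ℝ) :
    ∀ (j : ℕ) (i : Fin p), ∃ q : Polynomial ℝ, ∀ τ : ℝ,
      cholCol p G (fun a b => τ * χ1 a b + (1 - τ) * χ2 a b) D j i = q.eval τ := by
  intro j
  induction j using Nat.strong_induction_on with
  | _ j IH =>
  intro i
  by_cases hj : j < p
  · by_cases h1 : (i : ℕ) = j
    · exact ⟨1, fun τ => by rw [cholCol_unfold _ _ _ _ _ hj, if_pos h1]; simp⟩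
    · by_cases h2 : (i : ℕ) < j
      · exact ⟨0, fun τ => by
          rw [cholCol_unfold _ _ _ _ _ hj, if_neg h1, if_pos h2]; simp⟩
      · by_cases h3 : G.Adj i ⟨j, hj⟩
        · refine ⟨C (χ2 i ⟨j, hj⟩) + (C (χ1 i ⟨j, hj⟩) - C (χ2 i ⟨j, hj⟩)) * X,
            fun τ => by
              rw [cholCol_unfold _ _ _ _ _ hj, if_neg h1, if_neg h2, if_pos h3]
              simp
              ring⟩
        · choose Q hQ using fun (k : ℕ) (hk : k < j) (r : Fin p) => IH k hk r
          refine ⟨C (-(D ⟨j, hj⟩)⁻¹) * ∑ k ∈ (Finset.range j).attach,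
            Q k.1 (Finset.mem_range.mp k.2) i * Q k.1 (Finset.mem_range.mp k.2) ⟨j, hj⟩ *
              C (D ⟨k.1, (Finset.mem_range.mp k.2).trans hj⟩), fun τ => ?_⟩
          rw [cholCol_unfold _ _ _ _ _ hj, if_neg h1, if_neg h2, if_neg h3]
          rw [eval_mul, eval_C, eval_finset_sum]
          rw [div_eq_mul_inv, neg_mul_comm]
          rw [← Finset.sum_congr rfl (fun k _ => ?_)]
          · ring
          · rw [eval_mul, eval_mul, eval_C,
              ← hQ k.1 (Finset.mem_range.mp k.2) i τ,
              ← hQ k.1 (Finset.mem_range.mp k.2) ⟨j, hj⟩ τ]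
  · exact ⟨0, fun τ => by rw [cholCol_of_ge _ _ _ _ _ hj]; simp⟩

open Finset in
lemma Dof_one {p : ℕ} (k : Fin p) : Dof p (fun _ => (1:ℝ)) k = 1 := by
  simp [Dof]

open Finset in
lemma Dof_update_one {p : ℕ} (w : Fin p) (t : ℝ) (k : Fin p) :
    Dof p (Function.update (fun _ => (1:ℝ)) w t) k = if w ≤ k then t else 1 := by
  unfold Dof
  by_cases h : w ≤ k
  · rw [if_pos h]
    rw [Finset.prod_eq_single w]
    · simp
    · intro l _ hlw
      simp [Function.update_of_ne hlw]
    · intro habs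
      exact absurd (Finset.mem_Iic.mpr h) habs
  · rw [if_neg h]
    apply Finset.prod_eq_one
    intro l hl
    have : l ≠ w := fun he => h (he ▸ Finset.mem_Iic.mp hl)
    simp [Function.update_of_ne this]

/-- Extraction of an induced ("chordless") low path from a low walk. -/
lemma exists_induced_lowPath {p : ℕ} (G : SimpleGraph (Fin p)) (a b : Fin p)
    (hab : (b : ℕ) < (a : ℕ)) (hnadj : ¬ G.Adj a b)
    (hw : LowWalk G.Adj (b : ℕ) a b) :
    ∃ (n : ℕ) (x : ℕ → Fin p), 0 < n ∧ x 0 = a ∧ x n = b ∧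
      (∀ r, r < n → G.Adj (x r) (x (r+1))) ∧
      (∀ r r', r ≤ n → r' ≤ n → x r = x r' → r = r') ∧
      (∀ r r', r + 1 < r' → r' ≤ n → ¬ G.Adj (x r) (x r')) ∧
      (∀ i, 0 < i → i < n → (x i : ℕ) < (b : ℕ)) := by
  classical
  set P : ℕ → Prop := fun n => ∃ x : ℕ → Fin p, x 0 = a ∧ x n = b ∧
    (∀ r, r < n → G.Adj (x r) (x (r+1))) ∧
    (∀ i, 0 < i → i < n → (x i : ℕ) < (b : ℕ)) with hP
  have hex : ∃ n, P n := by
    obtain ⟨n, hn, x, h0, hn', hadj, hint⟩ := hw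
    exact ⟨n, x, h0, hn', hadj, hint⟩
  obtain ⟨n₀, hP₀, hmin⟩ : ∃ n, P n ∧ ∀ m, m < n → ¬ P m :=
    ⟨Nat.find hex, Nat.find_spec hex, fun m hm => Nat.find_min hex hm⟩
  obtain ⟨x, hx0, hxn, hxadj, hxint⟩ := hP₀
  have hne : a ≠ b := fun h => by rw [h] at hab; omega
  have hn0pos : 0 < n₀ := by
    rcases Nat.eq_zero_or_pos n₀ with h | h
    · rw [h] at hxn; rw [← hx0, hxn] at hne; exact absurd rfl hne
    · exact h
  -- injectivity
  have hinj : ∀ r r', r ≤ n₀ → r' ≤ n₀ → x r = x r' → r = r' := by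
    have key : ∀ r r', r < r' → r' ≤ n₀ → x r = x r' → False := by
      intro r r' hrr' hr'n heq
      rcases Nat.eq_or_lt_of_le hr'n with hr'e | hr'lt
      · -- r' = n₀, so x r = b
        rcases Nat.eq_zero_or_pos r with h0 | hpos
        · rw [h0] at heq; rw [hx0] at heq
          rw [hr'e, hxn] at heq; exact hne heq
        · have := hxint r hpos (by omega)
          rw [heq, hr'e, hxn] at this; omega
      · rcases Nat.eq_zero_or_pos r with h0 | hpos
        · rw [h0, hx0] at heq
          have := hxint r' (by omega) hr'lt
          rw [← heq] at this; omega
        · -- interior duplicate : splice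
          refine hmin (n₀ - (r' - r)) (by omega) ⟨fun i => if i ≤ r then x i else x (i + (r' - r)),
            ?_, ?_, ?_, ?_⟩
          · simp [hx0]
          · show (if n₀ - (r' - r) ≤ r then x (n₀ - (r' - r)) else x (n₀ - (r' - r) + (r' - r))) = b
            rw [if_neg (by omega), (by omega : n₀ - (r' - r) + (r' - r) = n₀), hxn]
          · intro i hi
            show G.Adj (if i ≤ r then x i else x (i + (r' - r)))
              (if i + 1 ≤ r then x (i+1) else x (i + 1 + (r' - r)))
            by_cases hir : i + 1 ≤ r
            · rw [if_pos (by omega), if_pos hir]; exact hxadj i (by omega)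
            · by_cases hir' : i ≤ r
              · have hieq : i = r := by omega
                rw [if_pos hir', if_neg hir, hieq, heq,
                  (by omega : r + 1 + (r' - r) = r' + 1)]
                exact hxadj r' (by omega)
              · rw [if_neg hir', if_neg hir, (by omega : i + 1 + (r' - r) = (i + (r' - r)) + 1)]
                exact hxadj (i + (r' - r)) (by omega)
          · intro i h1 h2
            show ((if i ≤ r then x i else x (i + (r' - r))) : Fin p).1 < (b : ℕ)
            by_cases hir : i ≤ r
            · rw [if_pos hir]; exact hxint i h1 (by omega)
            · rw [if_neg hir]; exact hxint (i + (r' - r)) (by omega) (by omega)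
    intro r r' hr hr' heq
    rcases Nat.lt_trichotomy r r' with h | h | h
    · exact absurd heq (fun he => key r r' h hr' he)
    · exact h
    · exact absurd heq.symm (fun he => key r' r h hr he)
  -- chordlessness
  have hchord : ∀ r r', r + 1 < r' → r' ≤ n₀ → ¬ G.Adj (x r) (x r') := by
    intro r r' hrr' hr'n hadj
    by_cases hend : r = 0 ∧ r' = n₀
    · rw [hend.1, hend.2, hx0, hxn] at hadj; exact hnadj hadj
    · refine hmin (n₀ - (r' - r - 1)) (by omega)
        ⟨fun i => if i ≤ r then x i else x (i + (r' - r - 1)), ?_, ?_, ?_, ?_⟩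
      · simp [hx0]
      · show (if n₀ - (r' - r - 1) ≤ r then x (n₀ - (r' - r - 1))
            else x (n₀ - (r' - r - 1) + (r' - r - 1))) = b
        have hrn : r + 1 < n₀ ∨ r' < n₀ := by
          rcases Nat.eq_or_lt_of_le hr'n with he | hlt
          · left; omega
          · right; exact hlt
        rw [if_neg (by omega), (by omega : n₀ - (r' - r - 1) + (r' - r - 1) = n₀), hxn]
      · intro i hi
        show G.Adj (if i ≤ r then x i else x (i + (r' - r - 1)))
          (if i + 1 ≤ r then x (i+1) else x (i + 1 + (r' - r - 1)))
        by_cases hir : i + 1 ≤ r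
        · rw [if_pos (by omega), if_pos hir]; exact hxadj i (by omega)
        · by_cases hir' : i ≤ r
          · have hieq : i = r := by omega
            rw [if_pos hir', if_neg hir, hieq, (by omega : r + 1 + (r' - r - 1) = r')]
            exact hadj
          · rw [if_neg hir', if_neg hir,
              (by omega : i + 1 + (r' - r - 1) = (i + (r' - r - 1)) + 1)]
            exact hxadj (i + (r' - r - 1)) (by omega)
      · intro i h1 h2
        show ((if i ≤ r then x i else x (i + (r' - r - 1))) : Fin p).1 < (b : ℕ)
        by_cases hir : i ≤ r
        · rw [if_pos hir]
          exact hxint i h1 (by omega)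
        · rw [if_neg hir]
          exact hxint (i + (r' - r - 1)) (by omega) (by omega)
  exact ⟨n₀, x, hn0pos, hx0, hxn, hxadj, hinj, hchord, hxint⟩
lemma lowWalk_last {p : ℕ} {R : Fin p → Fin p → Prop} {c : ℕ} {a b : Fin p}
    (h : LowWalk R c a b) : ∃ z, R z b := by
  obtain ⟨m, hm, z, hz0, hzm, hadj, hint⟩ := h
  have := hadj (m-1) (by omega)
  rw [(by omega : m - 1 + 1 = m), hzm] at this
  exact ⟨z (m-1), this⟩

lemma rpath_mem_right {p : ℕ} {x : ℕ → Fin p} {n : ℕ} {z b : Fin p}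
    (h : Rpath x n z b) : ∃ r, r ≤ n ∧ b = x r := by
  obtain ⟨r, hr, hc | hc⟩ := h
  · exact ⟨r+1, by omega, hc.2⟩
  · exact ⟨r, by omega, hc.1⟩

open Finset in
lemma cholCol_col_scale {p : ℕ} (G : SimpleGraph (Fin p)) (ℓ : Fin p → Fin p → ℝ)
    (w y : Fin p) (hwy : (w : ℕ) < (y : ℕ)) (hnadj : ¬ G.Adj y w) (t : ℝ) :
    cholCol p G ℓ (fun k => if w ≤ k then t else 1) ((w : ℕ)) y
      = (cholCol p G ℓ (fun _ => 1) ((w : ℕ)) y) / t := by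
  have hwp : (w : ℕ) < p := w.isLt
  have hmk : (⟨(w : ℕ), hwp⟩ : Fin p) = w := by apply Fin.ext; rfl
  rw [cholCol_unfold _ _ _ _ _ hwp, cholCol_unfold _ _ _ _ _ hwp]
  rw [if_neg (by omega), if_neg (by omega)]
  have hnadj' : ¬ G.Adj y ⟨(w : ℕ), hwp⟩ := by rw [hmk]; exact hnadj
  rw [if_neg hnadj', if_neg hnadj']
  have hsum : ∑ k ∈ (Finset.range (w : ℕ)).attach,
      cholCol p G ℓ (fun k => if w ≤ k then t else 1) k.1 y *
        cholCol p G ℓ (fun k => if w ≤ k then t else 1) k.1 ⟨(w : ℕ), hwp⟩ *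
        (fun k => if w ≤ k then t else 1) (⟨k.1, (Finset.mem_range.mp k.2).trans hwp⟩ : Fin p)
      = ∑ k ∈ (Finset.range (w : ℕ)).attach,
      cholCol p G ℓ (fun _ => 1) k.1 y *
        cholCol p G ℓ (fun _ => 1) k.1 ⟨(w : ℕ), hwp⟩ *
        (fun _ => (1:ℝ)) (⟨k.1, (Finset.mem_range.mp k.2).trans hwp⟩ : Fin p) := by
    refine Finset.sum_congr rfl (fun k _ => ?_)
    have hk := Finset.mem_range.mp k.2
    have hagree : ∀ l : Fin p, (l : ℕ) ≤ k.1 →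
        (fun k => if w ≤ k then t else 1) l = (fun _ => (1:ℝ)) l := by
      intro l hl
      simp only []
      rw [if_neg (fun hwl : w ≤ l => by
        have : (w : ℕ) ≤ (l : ℕ) := hwl
        omega)]
    rw [cholCol_congr_D G ℓ k.1 _ _ hagree, cholCol_congr_D G ℓ k.1 _ _ hagree]
    simp only []
    rw [if_neg (fun hwl : w ≤ (⟨k.1, hk.trans hwp⟩ : Fin p) => by
      have : (w : ℕ) ≤ k.1 := hwl
      omega)]
  rw [hsum]
  simp only []
  rw [if_pos (show w ≤ (⟨(w : ℕ), hwp⟩ : Fin p) from le_of_eq hmk.symm)]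
  rw [div_one]
  rw [if_neg (show ¬ (y : ℕ) = (w : ℕ) by omega),
    if_neg (show ¬ (y : ℕ) < (w : ℕ) by omega)]
open Finset Polynomial in
lemma key_contradiction {p : ℕ} (G : SimpleGraph (Fin p)) (hB : PropertyB p G)
    (u v w : Fin p) (hwv : (w : ℕ) < (v : ℕ)) (hvu : (v : ℕ) < (u : ℕ))
    (hnuv : ¬ G.Adj u v) (hnuw : ¬ G.Adj u w) (hnvw : ¬ G.Adj v w)
    (hfuw : LowWalk G.Adj ((w : ℕ)) u w) (hfvw : LowWalk G.Adj ((w : ℕ)) v w) :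
    False := by
  classical
  obtain ⟨n1, x1, hn1, hx10, hx1n, hadj1, hinj1, hchord1, hint1⟩ :=
    exists_induced_lowPath G u w (by omega) hnuw hfuw
  obtain ⟨n2, x2, hn2, hx20, hx2n, hadj2, hinj2, hchord2, hint2⟩ :=
    exists_induced_lowPath G v w (by omega) hnvw hfvw
  obtain ⟨qf, hqf⟩ := cholCol_poly G (fun a b => if Rpath x1 n1 a b then 1 else 0)
    (fun a b => if Rpath x2 n2 a b then 1 else 0) (fun _ => 1) ((w : ℕ)) u
  obtain ⟨qg, hqg⟩ := cholCol_poly G (fun a b => if Rpath x1 n1 a b then 1 else 0)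
    (fun a b => if Rpath x2 n2 a b then 1 else 0) (fun _ => 1) ((w : ℕ)) v
  -- value of the pure path specializations
  have hval1 : cholCol p G (fun a b => if Rpath x1 n1 a b then (1:ℝ) else 0)
      (fun _ => 1) ((w : ℕ)) u = (-1 : ℝ) ^ (n1 - 1) := by
    have h0 := cholCol_path G x1 n1 hinj1 hadj1 hchord1 n1 0 n1 (by omega) hn1 le_rfl ?_
    · rw [hx10, hx1n, min_eq_right (by omega), if_neg (by omega), Nat.sub_zero] at h0
      exact h0
    · intro q h1 h2
      rw [hx10, hx1n, min_eq_right (by omega)]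
      exact hint1 q h1 h2
  have hval2 : cholCol p G (fun a b => if Rpath x2 n2 a b then (1:ℝ) else 0)
      (fun _ => 1) ((w : ℕ)) v = (-1 : ℝ) ^ (n2 - 1) := by
    have h0 := cholCol_path G x2 n2 hinj2 hadj2 hchord2 n2 0 n2 (by omega) hn2 le_rfl ?_
    · rw [hx20, hx2n, min_eq_right (by omega), if_neg (by omega), Nat.sub_zero] at h0
      exact h0
    · intro q h1 h2
      rw [hx20, hx2n, min_eq_right (by omega)]
      exact hint2 q h1 h2
  have hfun1 : (fun a b => (1:ℝ) * (if Rpath x1 n1 a b then (1:ℝ) else 0) +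
      (1 - 1) * (if Rpath x2 n2 a b then (1:ℝ) else 0)) =
      (fun a b => if Rpath x1 n1 a b then (1:ℝ) else 0) := by
    funext a b; ring
  have hfun0 : (fun a b => (0:ℝ) * (if Rpath x1 n1 a b then (1:ℝ) else 0) +
      (1 - 0) * (if Rpath x2 n2 a b then (1:ℝ) else 0)) =
      (fun a b => if Rpath x2 n2 a b then (1:ℝ) else 0) := by
    funext a b; ring
  have hqfne : qf ≠ 0 := by
    intro h
    have h1 := hqf 1
    rw [hfun1, hval1, h] at h1
    simp at h1
  have hqgne : qg ≠ 0 := by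
    intro h
    have h1 := hqg 0
    rw [hfun0, hval2, h] at h1
    simp at h1
  -- a common point of nonvanishing
  have hexists : ∃ τ : ℝ, qf.eval τ ≠ 0 ∧ qg.eval τ ≠ 0 := by
    by_contra hc
    push_neg at hc
    have hall : ∀ τ : ℝ, (qf * qg).eval τ = 0 := by
      intro τ
      rw [eval_mul]
      by_cases h : qf.eval τ = 0
      · rw [h, zero_mul]
      · rw [hc τ h, mul_zero]
    have h0 : qf * qg = 0 := Polynomial.zero_of_eval_zero _ hall
    rcases mul_eq_zero.mp h0 with h | h
    · exact hqfne h
    · exact hqgne h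
  obtain ⟨τ, hτf, hτg⟩ := hexists
  have hBu : cholCol p G (fun a b => τ * (if Rpath x1 n1 a b then (1:ℝ) else 0) +
      (1 - τ) * (if Rpath x2 n2 a b then (1:ℝ) else 0)) (fun _ => 1) ((w : ℕ)) u
      = qf.eval τ := hqf τ
  have hBv : cholCol p G (fun a b => τ * (if Rpath x1 n1 a b then (1:ℝ) else 0) +
      (1 - τ) * (if Rpath x2 n2 a b then (1:ℝ) else 0)) (fun _ => 1) ((w : ℕ)) v
      = qg.eval τ := hqg τ
  -- support of the chosen specialization
  have hls : ∀ a b : Fin p, ¬ (Rpath x1 n1 a b ∨ Rpath x2 n2 a b) →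
      (τ * (if Rpath x1 n1 a b then (1:ℝ) else 0) +
        (1 - τ) * (if Rpath x2 n2 a b then (1:ℝ) else 0)) = 0 := by
    intro a b h
    push_neg at h
    rw [if_neg h.1, if_neg h.2]
    ring
  have hRSsymm : Symmetric (fun a b : Fin p => Rpath x1 n1 a b ∨ Rpath x2 n2 a b) := by
    rintro a b (h | h)
    · exact Or.inl (Rpath_symm x1 n1 h)
    · exact Or.inr (Rpath_symm x2 n2 h)
  -- the main computation of L_{uv} as a function of t
  have hvp : (v : ℕ) < p := v.isLt
  have hmkv : (⟨(v : ℕ), hvp⟩ : Fin p) = v := by apply Fin.ext; rfl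
  have hcomp : ∀ t : ℝ,
      cholCol p G (fun a b => τ * (if Rpath x1 n1 a b then (1:ℝ) else 0) +
        (1 - τ) * (if Rpath x2 n2 a b then (1:ℝ) else 0))
        (fun k => if w ≤ k then t else 1) ((v : ℕ)) u
      = -((∑ k ∈ Finset.range ((w : ℕ)),
            cholCol p G (fun a b => τ * (if Rpath x1 n1 a b then (1:ℝ) else 0) +
              (1 - τ) * (if Rpath x2 n2 a b then (1:ℝ) else 0)) (fun _ => 1) k u *
            cholCol p G (fun a b => τ * (if Rpath x1 n1 a b then (1:ℝ) else 0) +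
              (1 - τ) * (if Rpath x2 n2 a b then (1:ℝ) else 0)) (fun _ => 1) k v * 1) +
          (qf.eval τ / t) * (qg.eval τ / t) * t) / t := by
    intro t
    set ℓs := fun a b => τ * (if Rpath x1 n1 a b then (1:ℝ) else 0) +
      (1 - τ) * (if Rpath x2 n2 a b then (1:ℝ) else 0) with hℓs
    set Dt := fun k : Fin p => if w ≤ k then t else 1 with hDt
    rw [cholCol_unfold _ _ _ _ _ hvp, if_neg (by omega), if_neg (by omega)]
    have hnadj' : ¬ G.Adj u ⟨(v : ℕ), hvp⟩ := by rw [hmkv]; exact hnuv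
    rw [if_neg hnadj']
    -- rewrite the summand into a proof-irrelevant function of k
    have hsummand : ∀ k : {k // k ∈ Finset.range ((v : ℕ))},
        cholCol p G ℓs Dt k.1 u * cholCol p G ℓs Dt k.1 ⟨(v : ℕ), hvp⟩ *
          Dt (⟨k.1, (Finset.mem_range.mp k.2).trans hvp⟩ : Fin p)
        = (fun k : ℕ => cholCol p G ℓs Dt k u * cholCol p G ℓs Dt k v *
            (if (w : ℕ) ≤ k then t else 1)) k.1 := by
      rintro ⟨k, hk⟩
      simp only [hmkv, hDt]
      congr 1
    rw [Finset.sum_congr rfl (fun k _ => hsummand k),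
      Finset.sum_attach (Finset.range ((v : ℕ)))
        (fun k : ℕ => cholCol p G ℓs Dt k u * cholCol p G ℓs Dt k v *
          (if (w : ℕ) ≤ k then t else 1))]
    rw [← Finset.sum_range_add_sum_Ico _ (show (w : ℕ) + 1 ≤ (v : ℕ) by omega)]
    -- the Ico part vanishes
    have hIco : ∑ k ∈ Finset.Ico ((w : ℕ) + 1) ((v : ℕ)),
        (cholCol p G ℓs Dt k u * cholCol p G ℓs Dt k v *
          (if (w : ℕ) ≤ k then t else 1)) = 0 := by
      refine Finset.sum_eq_zero (fun k hk => ?_)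
      rw [Finset.mem_Ico] at hk
      have hkp : k < p := hk.2.trans hvp
      have hzero : cholCol p G ℓs Dt k v = 0 := by
        refine cholCol_eq_zero_of_not_lowWalk G ℓs Dt _ hRSsymm hls k hkp v (by omega) ?_
        intro hw0
        obtain ⟨z, hz⟩ := lowWalk_last hw0
        rcases hz with h | h
        · obtain ⟨r, hrn, he⟩ := rpath_mem_right h
          have hkval : k = (x1 r : ℕ) := congrArg Fin.val he
          rcases Nat.eq_zero_or_pos r with h0 | hpos
          · rw [h0, hx10] at hkval; omega
          · rcases Nat.eq_or_lt_of_le hrn with he' | hlt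
            · rw [he', hx1n] at hkval; omega
            · have := hint1 r hpos hlt; omega
        · obtain ⟨r, hrn, he⟩ := rpath_mem_right h
          have hkval : k = (x2 r : ℕ) := congrArg Fin.val he
          rcases Nat.eq_zero_or_pos r with h0 | hpos
          · rw [h0, hx20] at hkval; omega
          · rcases Nat.eq_or_lt_of_le hrn with he' | hlt
            · rw [he', hx2n] at hkval; omega
            · have := hint2 r hpos hlt; omega
      rw [hzero]; ring
    rw [hIco, add_zero, Finset.sum_range_succ]
    -- the k = w term
    have hterm : cholCol p G ℓs Dt ((w : ℕ)) u * cholCol p G ℓs Dt ((w : ℕ)) v *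
        (if (w : ℕ) ≤ (w : ℕ) then t else 1)
        = (qf.eval τ / t) * (qg.eval τ / t) * t := by
      rw [if_pos le_rfl, hDt,
        cholCol_col_scale G ℓs w u (by omega) hnuw t,
        cholCol_col_scale G ℓs w v (by omega) hnvw t,
        hℓs, hBu, hBv]
    -- the k < w terms
    have hlow : ∀ k ∈ Finset.range ((w : ℕ)),
        cholCol p G ℓs Dt k u * cholCol p G ℓs Dt k v * (if (w : ℕ) ≤ k then t else 1)
        = cholCol p G ℓs (fun _ => 1) k u * cholCol p G ℓs (fun _ => 1) k v * 1 := by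
      intro k hk
      rw [Finset.mem_range] at hk
      have hagree : ∀ l : Fin p, (l : ℕ) ≤ k → Dt l = (fun _ => (1:ℝ)) l := by
        intro l hl
        rw [hDt]
        simp only []
        rw [if_neg (fun hwl : w ≤ l => by
          have : (w : ℕ) ≤ (l : ℕ) := hwl
          omega)]
      rw [cholCol_congr_D G ℓs k _ _ hagree, cholCol_congr_D G ℓs k _ _ hagree,
        if_neg (by omega)]
    rw [Finset.sum_congr rfl hlow, hterm]
    -- the denominator
    have hden : Dt (⟨(v : ℕ), hvp⟩ : Fin p) = t := by
      rw [hDt]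
      simp only []
      rw [if_pos (show w ≤ (⟨(v : ℕ), hvp⟩ : Fin p) from by
        rw [hmkv]; exact le_of_lt (show w < v from by rw [Fin.lt_def]; omega))]
    rw [hden, hℓs]
  -- apply Property B and derive the contradiction
  have huv : v < u := by rw [Fin.lt_def]; omega
  obtain ⟨a, b, hab⟩ := hB u v huv hnuv w
    (fun a b => τ * (if Rpath x1 n1 a b then (1:ℝ) else 0) +
      (1 - τ) * (if Rpath x2 n2 a b then (1:ℝ) else 0))
    (fun _ => 1) (fun _ => one_pos)
  have hDof : ∀ t : ℝ, Dof p (Function.update (fun _ => (1:ℝ)) w t) =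
      fun k => if w ≤ k then t else 1 := fun t => funext (Dof_update_one w t)
  set K := ∑ k ∈ Finset.range ((w : ℕ)),
      cholCol p G (fun a b => τ * (if Rpath x1 n1 a b then (1:ℝ) else 0) +
        (1 - τ) * (if Rpath x2 n2 a b then (1:ℝ) else 0)) (fun _ => 1) k u *
      cholCol p G (fun a b => τ * (if Rpath x1 n1 a b then (1:ℝ) else 0) +
        (1 - τ) * (if Rpath x2 n2 a b then (1:ℝ) else 0)) (fun _ => 1) k v * 1 with hK
  have h1 := hab 1 one_pos
  have h2 := hab 2 (by norm_num)
  have h4 := hab 4 (by norm_num)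
  rw [hDof 1, hcomp 1] at h1
  rw [hDof 2, hcomp 2] at h2
  rw [hDof 4, hcomp 4] at h4
  have hBB : qf.eval τ * qg.eval τ = 0 := by
    norm_num at h1 h2 h4
    nlinarith [h1, h2, h4]
  exact (mul_ne_zero hτf hτg) hBB
/-- Maximality theorem: if `G`, with the identity ordering, satisfies both
Property-A and Property-B, then the identity ordering is a Generalized Bartlett ordering of
`G`; in particular `G` is a Generalized Bartlett graph. -/
theorem isGBOrdering_of_propertyA_and_propertyB (p : ℕ) (G : SimpleGraph (Fin p))
    (hA : PropertyA p G) (hB : PropertyB p G) :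
    IsGBOrdering (Equiv.refl (Fin p)) G ∧ IsGB G := by
  have hgb : IsGBOrdering (Equiv.refl (Fin p)) G := by
    rintro ⟨u, v, w, h1, h2, h3, h4, h5, h6⟩
    have wuv : LowWalk G.Adj (min (u:ℕ) (v:ℕ)) u v := triSeq_adj_lowWalk G (p-2) u v h4
    have wvw : LowWalk G.Adj (min (v:ℕ) (w:ℕ)) v w := triSeq_adj_lowWalk G (p-2) v w h5
    have wuw : LowWalk G.Adj (min (u:ℕ) (w:ℕ)) u w := triSeq_adj_lowWalk G (p-2) u w h6
    have wvu : LowWalk G.Adj (min (v:ℕ) (u:ℕ)) v u := by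
      rw [min_comm]; exact wuv.symm (fun _ _ h => h.symm)
    have wwv : LowWalk G.Adj (min (w:ℕ) (v:ℕ)) w v := by
      rw [min_comm]; exact wvw.symm (fun _ _ h => h.symm)
    have wwu : LowWalk G.Adj (min (w:ℕ) (u:ℕ)) w u := by
      rw [min_comm]; exact wuw.symm (fun _ _ h => h.symm)
    have main : ∀ X Y Z : Fin p, (Z:ℕ) < (Y:ℕ) → (Y:ℕ) < (X:ℕ) →
        ¬ G.Adj X Y → ¬ G.Adj X Z → ¬ G.Adj Y Z →
        LowWalk G.Adj (min (X:ℕ) (Z:ℕ)) X Z →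
        LowWalk G.Adj (min (Y:ℕ) (Z:ℕ)) Y Z → False := by
      intro X Y Z hZY hYX m1 m2 m3 w1 w2
      exact key_contradiction G hB X Y Z hZY hYX m1 m2 m3
        (by rwa [min_eq_right (by omega)] at w1)
        (by rwa [min_eq_right (by omega)] at w2)
    rcases lt_trichotomy (u:ℕ) (v:ℕ) with h_uv | h_uv | h_uv
    · rcases lt_trichotomy (v:ℕ) (w:ℕ) with h_vw | h_vw | h_vw
      · exact main w v u h_uv h_vw (fun h => h2 h.symm) (fun h => h3 h.symm)
          (fun h => h1 h.symm) wwu wvu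
      · exact h5.ne (Fin.ext h_vw)
      · rcases lt_trichotomy (u:ℕ) (w:ℕ) with h_uw | h_uw | h_uw
        · exact main v w u h_uw h_vw h2 (fun h => h1 h.symm) (fun h => h3 h.symm)
            wvu wwu
        · exact h6.ne (Fin.ext h_uw)
        · exact main v u w h_uw h_uv (fun h => h1 h.symm) h2 h3 wvw wuw
    · exact h4.ne (Fin.ext h_uv)
    · rcases lt_trichotomy (u:ℕ) (w:ℕ) with h_uw | h_uw | h_uw
      · exact main w u v h_uv h_uw (fun h => h3 h.symm) (fun h => h2 h.symm) h1
          wwv wuv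
      · exact h6.ne (Fin.ext h_uw)
      · rcases lt_trichotomy (v:ℕ) (w:ℕ) with h_vw | h_vw | h_vw
        · exact main u w v h_vw h_uw h3 h1 (fun h => h2 h.symm) wuv wwv
        · exact h5.ne (Fin.ext h_vw)
        · exact main u v w h_vw h_uv h1 h3 h2 wuw wvw
  exact ⟨hgb, ⟨p, Equiv.refl _, hgb⟩⟩
end
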